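/- arXiv:2410.10691 — 5 statements merged into one kernel-verified Lean document; each statement's English description precedes it below -/
import Mathlib

section
/- Matrix-Tree theorem for Markov chains: for a finite strongly connected directed graph G with positive edge labels, the vector ρ with components ρ_i = ∑_{T ∈ Θ_i} q(T), where Θ_i is the set of spanning trees of G rooted at vertex i and q(T) = ∏_{e ∈ T} ℓ(e), is a nonzero element of the kernel of the Laplacian L(G). -/
open Finset

attribute [local instance] Classical.propDecidable

/-- `i → j` is an edge of the graph when its label is positive. -/
def IsEdge {n : ℕ} (ℓ : Fin n → Fin n → ℝ) (i j : Fin n) : Prop := 0 < ℓ i j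

/-- Strong connectivity: any two vertices are joined by a directed path of edges. -/
def StronglyConnected {n : ℕ} (ℓ : Fin n → Fin n → ℝ) : Prop :=
  ∀ i j : Fin n, Relation.ReflTransGen (IsEdge ℓ) i j

/-- Reversibility: `i → j` is an edge iff `j → i` is. -/
def Reversible {n : ℕ} (ℓ : Fin n → Fin n → ℝ) : Prop :=
  ∀ i j : Fin n, 0 < ℓ i j ↔ 0 < ℓ j i

/-- The Laplacian matrix: `L j i = ℓ i j` off the diagonal,
`L i i = -∑_{k ≠ i} ℓ i k`. -/
noncomputable def MarkovLaplacian {n : ℕ} (ℓ : Fin n → Fin n → ℝ) :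
    Matrix (Fin n) (Fin n) ℝ :=
  fun j i => if j = i then -∑ k ∈ univ.filter (· ≠ i), ℓ i k else ℓ i j

/-- A spanning tree rooted at `r`, encoded as a parent map `t`: the root is fixed,
every other vertex has a positively-labelled edge to its parent, and iterating
the parent map from any vertex reaches the root. -/
def IsSpanningTree {n : ℕ} (ℓ : Fin n → Fin n → ℝ) (r : Fin n)
    (t : Fin n → Fin n) : Prop :=
  t r = r ∧ (∀ v, v ≠ r → 0 < ℓ v (t v)) ∧ ∀ v, ∃ k, t^[k] v = r

/-- `Θ_r`: the set of spanning trees rooted at `r`. -/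
noncomputable def Trees {n : ℕ} (ℓ : Fin n → Fin n → ℝ) (r : Fin n) :
    Finset (Fin n → Fin n) :=
  univ.filter (IsSpanningTree ℓ r)

/-- `q(T)`: the product of the edge labels over the edges of the tree. -/
noncomputable def treeWeight {n : ℕ} (ℓ : Fin n → Fin n → ℝ) (r : Fin n)
    (t : Fin n → Fin n) : ℝ :=
  ∏ v ∈ univ.filter (· ≠ r), ℓ v (t v)

/-- A directed path from `i` to `j`, as the list of visited vertices. -/
def IsPathFrom {n : ℕ} (ℓ : Fin n → Fin n → ℝ) (i j : Fin n)
    (p : List (Fin n)) : Prop :=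
  p.Chain' (IsEdge ℓ) ∧ p.head? = some i ∧ p.getLast? = some j

/-- A minimal (self-avoiding) path from `i` to `j`: all vertices distinct. -/
def IsMinPathFrom {n : ℕ} (ℓ : Fin n → Fin n → ℝ) (i j : Fin n)
    (p : List (Fin n)) : Prop :=
  IsPathFrom ℓ i j p ∧ p.Nodup

/-- `S(P)`: the action / entropy change of a path, the sum of
`log (ℓ(a→b)/ℓ(b→a))` over its consecutive pairs `a → b`. -/
noncomputable def pathAction {n : ℕ} (ℓ : Fin n → Fin n → ℝ)
    (p : List (Fin n)) : ℝ :=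
  ((p.zip p.tail).map (fun e => Real.log (ℓ e.1 e.2 / ℓ e.2 e.1))).sum

/-- `q(P)`: the product of the labels over the edges of a path. -/
noncomputable def pathWeight {n : ℕ} (ℓ : Fin n → Fin n → ℝ)
    (p : List (Fin n)) : ℝ :=
  ((p.zip p.tail).map (fun e => ℓ e.1 e.2)).prod

/-- The path from `i` to the root `r` along the parent map `t` (fuel `k`). -/
def treePathAux {n : ℕ} (t : Fin n → Fin n) (r : Fin n) :
    ℕ → Fin n → List (Fin n)
  | 0, i => [i]
  | k + 1, i => if i = r then [i] else i :: treePathAux t r k (t i)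

/-- `T_i`: the unique path from `i` to the root `r` on the spanning tree `t`. -/
def treePath {n : ℕ} (t : Fin n → Fin n) (r : Fin n) (i : Fin n) :
    List (Fin n) :=
  treePathAux t r n i

/-- The cycle condition: `S(C) = 0` for every directed cycle `C`
(a directed path whose first and last vertices agree). -/
def CycleCondition {n : ℕ} (ℓ : Fin n → Fin n → ℝ) : Prop :=
  ∀ p : List (Fin n), p.Chain' (IsEdge ℓ) → p.head? = p.getLast? →
    pathAction ℓ p = 0

/-- The tree-reversal map `Φ_{r,j}`: given a tree `t` rooted at `r`, reverse the
edges on the unique tree path from `j` to `r`, obtaining a tree rooted at `j`. -/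
def reverseTree {n : ℕ} (t : Fin n → Fin n) (r j : Fin n) : Fin n → Fin n :=
  fun v =>
    (((treePath t r j).zip (treePath t r j).tail).find? (fun e => e.2 == v)).elim
      (if v = j then j else t v) (fun e => e.1)

-- Auxiliary lemmas

lemma iterate_agree {α : Type*} (f g : α → α) (a : α)
    (hfg : ∀ v, v ≠ a → g v = f v) (v : α) :
    ∀ s : ℕ, (∀ s' < s, f^[s'] v ≠ a) → g^[s] v = f^[s] v := by
  intro s
  induction s with
  | zero => intro _; rfl
  | succ s ih =>
    intro h
    rw [Function.iterate_succ_apply', Function.iterate_succ_apply',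
      ih (fun s' hs' => h s' (Nat.lt_succ_of_lt hs')),
      hfg _ (h s (Nat.lt_succ_self s))]

lemma iterate_hit {α : Type*} (f g : α → α) (a : α)
    (hfg : ∀ v, v ≠ a → g v = f v) (v : α) (h : ∃ s, f^[s] v = a) :
    ∃ s, g^[s] v = a := by
  classical
  refine ⟨Nat.find h, ?_⟩
  rw [iterate_agree f g a hfg v _ (fun s' hs' => Nat.find_min h hs')]
  exact Nat.find_spec h

lemma root_of_periodic {α : Type*} (t : α → α) (r v : α) (hr : t r = r) {k m : ℕ}
    (hk : t^[k] v = v) (hk1 : 1 ≤ k) (hm : t^[m] v = r) : v = r := by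
  have h1 : t^[k * m] v = v := by
    rw [Function.iterate_mul]; exact Function.iterate_fixed hk m
  have hle : m ≤ k * m := Nat.le_mul_of_pos_left m hk1
  have h2 : t^[k * m] v = r := by
    rw [show k * m = (k * m - m) + m by omega, Function.iterate_add_apply, hm,
      Function.iterate_fixed hr]
  rw [h1] at h2; exact h2

lemma exists_spanning_tree {n : ℕ} (ℓ : Fin n → Fin n → ℝ)
    (hsc : StronglyConnected ℓ) (r : Fin n) : ∃ t, IsSpanningTree ℓ r t := by
  classical
  have H : ∀ v : Fin n, ∃ k : ℕ, ∃ l : List (Fin n), l.length = k ∧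
      List.Chain (IsEdge ℓ) v l ∧ (v :: l).getLast (List.cons_ne_nil _ _) = r := by
    intro v
    obtain ⟨l, hc, hl⟩ := List.exists_isChain_cons_of_relationReflTransGen (hsc v r)
    exact ⟨l.length, l, rfl, hc, hl⟩
  set d : Fin n → ℕ := fun v => Nat.find (H v) with hd
  have hstep : ∀ v, v ≠ r → ∃ w, IsEdge ℓ v w ∧ d w < d v := by
    intro v hv
    obtain ⟨l, hlen, hc, hlast⟩ := Nat.find_spec (H v)
    cases l with
    | nil => simp at hlast; exact absurd hlast hv
    | cons w l' =>
      obtain ⟨hedge, hc'⟩ := List.chain_cons.mp hc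
      rw [List.getLast_cons (List.cons_ne_nil _ _)] at hlast
      have hw : d w ≤ l'.length := Nat.find_le ⟨l', rfl, hc', hlast⟩
      refine ⟨w, hedge, lt_of_le_of_lt hw ?_⟩
      have : l'.length + 1 = d v := by simpa using hlen
      omega
  choose w hw hwd using hstep
  set t : Fin n → Fin n := fun v => if h : v = r then r else w v h with ht
  have htv : ∀ v (h : v ≠ r), t v = w v h := fun v h => dif_neg h
  refine ⟨t, dif_pos rfl, fun v hv => by rw [htv v hv]; exact hw v hv, ?_⟩
  have reach : ∀ m v, d v ≤ m → ∃ k, t^[k] v = r := by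
    intro m
    induction m with
    | zero =>
      intro v hv
      by_cases h : v = r
      · exact ⟨0, h⟩
      · exact absurd (hwd v h) (by omega)
    | succ m ih =>
      intro v hv
      by_cases h : v = r
      · exact ⟨0, h⟩
      · obtain ⟨k, hk⟩ := ih (w v h) (by have := hwd v h; omega)
        exact ⟨k + 1, by rw [Function.iterate_succ_apply, htv v h]; exact hk⟩
  exact fun v => reach (d v) v le_rfl

noncomputable def Fset {n : ℕ} (ℓ : Fin n → Fin n → ℝ) (j : Fin n) :
    Finset (Fin n → Fin n) :=
  univ.filter (fun f => (∀ v, 0 < ℓ v (f v)) ∧ f j ≠ j ∧ ∀ v, ∃ k, f^[k] (f v) = j)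

lemma mem_Fset {n : ℕ} {ℓ : Fin n → Fin n → ℝ} {j : Fin n} {f : Fin n → Fin n} :
    f ∈ Fset ℓ j ↔
      (∀ v, 0 < ℓ v (f v)) ∧ f j ≠ j ∧ ∀ v, ∃ k, f^[k] (f v) = j := by
  simp [Fset]

noncomputable def prevRoot {n : ℕ} (f : Fin n → Fin n) (j : Fin n) : Fin n :=
  if h : ∃ k, f^[k + 1] j = j then f^[Nat.find h] j else j

lemma prevRoot_eq {n : ℕ} {f : Fin n → Fin n} {j : Fin n}
    (h : ∃ k, f^[k + 1] j = j) : prevRoot f j = f^[Nat.find h] j := by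
  rw [prevRoot, dif_pos h]

lemma update_mem_Fset {n : ℕ} {ℓ : Fin n → Fin n → ℝ} {i j : Fin n}
    {t : Fin n → Fin n} (hij : i ≠ j) (hpos : 0 < ℓ i j)
    (ht : IsSpanningTree ℓ i t) : Function.update t i j ∈ Fset ℓ j := by
  obtain ⟨hti, htpos, htreach⟩ := ht
  set f := Function.update t i j with hf
  have hagree : ∀ v, v ≠ i → f v = t v := fun v hv => Function.update_of_ne hv _ _
  have hfi : f i = j := Function.update_self _ _ _
  rw [mem_Fset]
  refine ⟨fun v => ?_, ?_, fun v => ?_⟩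
  · by_cases h : v = i
    · rw [h, hfi]; exact hpos
    · rw [hagree v h]; exact htpos v h
  · rw [hagree j hij.symm]
    intro hjj
    obtain ⟨k, hk⟩ := htreach j
    rw [Function.iterate_fixed hjj k] at hk
    exact hij hk.symm
  · obtain ⟨s, hs⟩ := iterate_hit t f i hagree v (htreach v)
    refine ⟨s, ?_⟩
    rw [← Function.iterate_succ_apply, Function.iterate_succ_apply', hs, hfi]

lemma update_mem_Fset' {n : ℕ} {ℓ : Fin n → Fin n → ℝ} {j k : Fin n}
    {t : Fin n → Fin n} (hkj : k ≠ j) (hpos : 0 < ℓ j k)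
    (ht : IsSpanningTree ℓ j t) : Function.update t j k ∈ Fset ℓ j := by
  obtain ⟨htj, htpos, htreach⟩ := ht
  set f := Function.update t j k with hf
  have hagree : ∀ v, v ≠ j → f v = t v := fun v hv => Function.update_of_ne hv _ _
  have hfj : f j = k := Function.update_self _ _ _
  rw [mem_Fset]
  refine ⟨fun v => ?_, by rw [hfj]; exact hkj, fun v => ?_⟩
  · by_cases h : v = j
    · rw [h, hfj]; exact hpos
    · rw [hagree v h]; exact htpos v h
  · exact iterate_hit t f j hagree (f v) (htreach (f v))

lemma Fset_back {n : ℕ} {ℓ : Fin n → Fin n → ℝ} {j : Fin n} {f : Fin n → Fin n}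
    (hf : f ∈ Fset ℓ j) :
    f (prevRoot f j) = j ∧ prevRoot f j ≠ j ∧ 0 < ℓ (prevRoot f j) j ∧
      IsSpanningTree ℓ (prevRoot f j)
        (Function.update f (prevRoot f j) (prevRoot f j)) := by
  obtain ⟨hpos, hfj, hreach⟩ := mem_Fset.mp hf
  have hreach' : ∀ v, ∃ k, f^[k] v = j := by
    intro v
    obtain ⟨k, hk⟩ := hreach v
    exact ⟨k + 1, by rw [Function.iterate_succ_apply]; exact hk⟩
  have hcyc : ∃ k, f^[k + 1] j = j := by
    obtain ⟨k, hk⟩ := hreach j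
    exact ⟨k, by rw [Function.iterate_succ_apply]; exact hk⟩
  set i := prevRoot f j with hi
  have hieq : i = f^[Nat.find hcyc] j := prevRoot_eq hcyc
  have hfi : f i = j := by
    rw [hieq, ← Function.iterate_succ_apply' f (Nat.find hcyc) j]
    exact Nat.find_spec hcyc
  have hij : i ≠ j := fun h => hfj (by rw [h] at hfi; exact hfi)
  set t := Function.update f i i with htdef
  have hagree : ∀ v, v ≠ i → t v = f v := fun v hv => Function.update_of_ne hv _ _
  have hti : t i = i := Function.update_self _ _ _
  refine ⟨hfi, hij, by rw [← hfi]; exact hpos i, hti, fun v hv => ?_, fun v => ?_⟩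
  · rw [hagree v hv]; exact hpos v
  · refine iterate_hit f t i hagree v ?_
    obtain ⟨k, hk⟩ := hreach' v
    refine ⟨Nat.find hcyc + k, ?_⟩
    rw [Function.iterate_add_apply, hk, ← hieq]

lemma prevRoot_update {n : ℕ} {ℓ : Fin n → Fin n → ℝ} {i j : Fin n}
    {t : Fin n → Fin n} (hij : i ≠ j) (ht : IsSpanningTree ℓ i t) :
    prevRoot (Function.update t i j) j = i := by
  obtain ⟨hti, htpos, htreach⟩ := ht
  set f := Function.update t i j with hf
  have hagree : ∀ v, v ≠ i → f v = t v := fun v hv => Function.update_of_ne hv _ _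
  have hfi : f i = j := Function.update_self _ _ _
  have hP : ∃ s, t^[s] j = i := htreach j
  set p := Nat.find hP with hp
  have hfit : ∀ s ≤ p, f^[s] j = t^[s] j := by
    intro s hs
    exact iterate_agree t f i hagree j s
      (fun s' hs' => Nat.find_min hP (lt_of_lt_of_le hs' hs))
  have hfp : f^[p] j = i := by rw [hfit p le_rfl]; exact Nat.find_spec hP
  have hcyc : ∃ k, f^[k + 1] j = j := by
    refine ⟨p, ?_⟩
    rw [Function.iterate_succ_apply', hfp, hfi]
  rw [prevRoot_eq hcyc]
  have hm : Nat.find hcyc = p := by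
    have h1 : Nat.find hcyc ≤ p := Nat.find_le (by
      rw [Function.iterate_succ_apply', hfp, hfi])
    rcases lt_or_eq_of_le h1 with h2 | h2
    · exfalso
      have h3 : f^[Nat.find hcyc + 1] j = j := Nat.find_spec hcyc
      rw [hfit _ (by omega)] at h3
      have h4 : ∃ s, t^[s] j = i := htreach j
      obtain ⟨s, hs⟩ := h4
      exact hij (root_of_periodic t i j hti h3 (by omega) hs).symm
    · exact h2
  rw [hm, hfp]

lemma weight_update {n : ℕ} (ℓ : Fin n → Fin n → ℝ) (i j : Fin n)
    (t : Fin n → Fin n) :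
    ℓ i j * treeWeight ℓ i t = ∏ v, ℓ v (Function.update t i j v) := by
  classical
  rw [treeWeight, Finset.filter_ne',
    ← Finset.mul_prod_erase univ (fun v => ℓ v (Function.update t i j v))
      (Finset.mem_univ i)]
  congr 1
  · rw [Function.update_self]
  · refine Finset.prod_congr rfl fun v hv => ?_
    rw [Function.update_of_ne (Finset.ne_of_mem_erase hv)]

lemma sum_in {n : ℕ} (ℓ : Fin n → Fin n → ℝ) (hℓ : ∀ i j, 0 ≤ ℓ i j)
    (j : Fin n) :
    ∑ i ∈ univ.filter (· ≠ j), ℓ i j * ∑ T ∈ Trees ℓ i, treeWeight ℓ i T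
      = ∑ f ∈ Fset ℓ j, ∏ v, ℓ v (f v) := by
  classical
  have hsub : univ.filter (fun i => i ≠ j ∧ 0 < ℓ i j) ⊆ univ.filter (· ≠ j) := by
    intro x hx
    simp only [Finset.mem_filter] at *
    exact ⟨hx.1, hx.2.1⟩
  rw [← Finset.sum_subset hsub (by
    intro x hx hnx
    simp only [Finset.mem_filter, Finset.mem_univ, true_and, not_and, not_lt]
      at hx hnx
    rw [le_antisymm (hnx hx) (hℓ x j), zero_mul])]
  simp_rw [Finset.mul_sum]
  rw [Finset.sum_sigma' (univ.filter (fun i => i ≠ j ∧ 0 < ℓ i j))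
    (fun i => Trees ℓ i) (fun i T => ℓ i j * treeWeight ℓ i T)]
  refine Finset.sum_bij' (fun p _ => Function.update p.2 p.1 j)
    (fun f _ => ⟨prevRoot f j, Function.update f (prevRoot f j) (prevRoot f j)⟩)
    ?_ ?_ ?_ ?_ ?_
  · rintro ⟨i, T⟩ hp
    rw [Finset.mem_sigma, Finset.mem_filter, Trees, Finset.mem_filter] at hp
    exact update_mem_Fset hp.1.2.1 hp.1.2.2 hp.2.2
  · intro f hf
    obtain ⟨hfi, hij, hpos, hst⟩ := Fset_back hf
    rw [Finset.mem_sigma, Finset.mem_filter, Trees, Finset.mem_filter]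
    exact ⟨⟨Finset.mem_univ _, hij, hpos⟩, Finset.mem_univ _, hst⟩
  · rintro ⟨i, T⟩ hp
    rw [Finset.mem_sigma, Finset.mem_filter, Trees, Finset.mem_filter] at hp
    have hpr : prevRoot (Function.update T i j) j = i :=
      prevRoot_update hp.1.2.1 hp.2.2
    refine Sigma.ext hpr (heq_of_eq ?_)
    dsimp only
    rw [hpr, Function.update_idem]
    exact Function.update_eq_self_iff.mpr hp.2.2.1.symm
  · intro f hf
    obtain ⟨hfi, hij, hpos, hst⟩ := Fset_back hf
    dsimp only
    rw [Function.update_idem]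
    exact Function.update_eq_self_iff.mpr hfi.symm
  · rintro ⟨i, T⟩ hp
    exact weight_update ℓ i j T

lemma sum_out {n : ℕ} (ℓ : Fin n → Fin n → ℝ) (hℓ : ∀ i j, 0 ≤ ℓ i j)
    (j : Fin n) :
    ∑ k ∈ univ.filter (· ≠ j), ℓ j k * ∑ T ∈ Trees ℓ j, treeWeight ℓ j T
      = ∑ f ∈ Fset ℓ j, ∏ v, ℓ v (f v) := by
  classical
  have hsub : univ.filter (fun k => k ≠ j ∧ 0 < ℓ j k) ⊆ univ.filter (· ≠ j) := by
    intro x hx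
    simp only [Finset.mem_filter] at *
    exact ⟨hx.1, hx.2.1⟩
  rw [← Finset.sum_subset hsub (by
    intro x hx hnx
    simp only [Finset.mem_filter, Finset.mem_univ, true_and, not_and, not_lt]
      at hx hnx
    rw [le_antisymm (hnx hx) (hℓ j x), zero_mul])]
  simp_rw [Finset.mul_sum]
  rw [Finset.sum_sigma' (univ.filter (fun k => k ≠ j ∧ 0 < ℓ j k))
    (fun _ => Trees ℓ j) (fun k T => ℓ j k * treeWeight ℓ j T)]
  refine Finset.sum_bij' (fun p _ => Function.update p.2 j p.1)
    (fun f _ => ⟨f j, Function.update f j j⟩) ?_ ?_ ?_ ?_ ?_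
  · rintro ⟨k, T⟩ hp
    rw [Finset.mem_sigma, Finset.mem_filter, Trees, Finset.mem_filter] at hp
    exact update_mem_Fset' hp.1.2.1 hp.1.2.2 hp.2.2
  · intro f hf
    obtain ⟨hpos, hfj, hreach⟩ := mem_Fset.mp hf
    rw [Finset.mem_sigma, Finset.mem_filter, Trees, Finset.mem_filter]
    have hagree : ∀ v, v ≠ j → Function.update f j j v = f v :=
      fun v hv => Function.update_of_ne hv _ _
    refine ⟨⟨Finset.mem_univ _, hfj, hpos j⟩, Finset.mem_univ _,
      Function.update_self _ _ _, fun v hv => by dsimp only; rw [hagree v hv]; exact hpos v,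
      fun v => ?_⟩
    refine iterate_hit f (Function.update f j j) j hagree v ?_
    obtain ⟨k, hk⟩ := hreach v
    exact ⟨k + 1, by rw [Function.iterate_succ_apply]; exact hk⟩
  · rintro ⟨k, T⟩ hp
    rw [Finset.mem_sigma, Finset.mem_filter, Trees, Finset.mem_filter] at hp
    refine Sigma.ext (Function.update_self _ _ _) (heq_of_eq ?_)
    dsimp only
    rw [Function.update_idem]
    exact Function.update_eq_self_iff.mpr hp.2.2.1.symm
  · intro f hf
    dsimp only
    rw [Function.update_idem, Function.update_eq_self]
  · rintro ⟨k, T⟩ hp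
    exact weight_update ℓ j k T


/-- Matrix-Tree theorem: the vector `ρ_i = ∑_{T ∈ Θ_i} q(T)` is a nonzero
element of the kernel of the Laplacian. -/
theorem matrix_tree_theorem {n : ℕ} (hn : 0 < n) (ℓ : Fin n → Fin n → ℝ)
    (hℓ : ∀ i j, 0 ≤ ℓ i j) (hsc : StronglyConnected ℓ) :
    (MarkovLaplacian ℓ).mulVec (fun i => ∑ T ∈ Trees ℓ i, treeWeight ℓ i T) = 0 ∧
    (fun i : Fin n => ∑ T ∈ Trees ℓ i, treeWeight ℓ i T) ≠ 0 := by
  constructor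
  · funext j
    have h1 := sum_in ℓ hℓ j
    have h2 := sum_out ℓ hℓ j
    simp only [Matrix.mulVec, dotProduct, Pi.zero_apply]
    rw [← Finset.sum_erase_add univ _ (Finset.mem_univ j)]
    have hLd : MarkovLaplacian ℓ j j = -∑ k ∈ univ.filter (· ≠ j), ℓ j k := by
      simp [MarkovLaplacian]
    have hsum : ∑ i ∈ univ.erase j,
        MarkovLaplacian ℓ j i * ∑ T ∈ Trees ℓ i, treeWeight ℓ i T
        = ∑ i ∈ univ.filter (· ≠ j), ℓ i j * ∑ T ∈ Trees ℓ i, treeWeight ℓ i T := by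
      rw [Finset.filter_ne']
      refine Finset.sum_congr rfl fun i hi => ?_
      have hne : j ≠ i := Ne.symm (Finset.ne_of_mem_erase hi)
      simp only [MarkovLaplacian]
      rw [if_neg hne]
    rw [hsum, h1, hLd, neg_mul, Finset.sum_mul, h2]
    ring
  · intro hzero
    set r : Fin n := ⟨0, hn⟩
    obtain ⟨t, ht⟩ := exists_spanning_tree ℓ hsc r
    have htm : t ∈ Trees ℓ r := by
      rw [Trees, Finset.mem_filter]; exact ⟨Finset.mem_univ _, ht⟩
    have hpos : 0 < ∑ T ∈ Trees ℓ r, treeWeight ℓ r T := by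
      refine Finset.sum_pos (fun T hT => ?_) ⟨t, htm⟩
      rw [Trees, Finset.mem_filter] at hT
      refine Finset.prod_pos fun v hv => ?_
      rw [Finset.mem_filter] at hv
      exact hT.2.2.1 v hv.2
    have hz := congrFun hzero r
    simp only [Pi.zero_apply] at hz
    exact hpos.ne' hz
end

section
/- A finite strongly connected reversible graph G satisfies detailed balance (there exists a positive vector p in ker L(G) with p_i ℓ(i→j) = p_j ℓ(j→i) for all edges i→j) if and only if the cycle condition holds: S(C) = 0 for every directed cycle C. -/
open Finset

attribute [local instance] Classical.propDecidable

/-- The Laplacian matrix: `L j i = ℓ i j` off the diagonal,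
`L i i = -∑_{k ≠ i} ℓ i k`. -/
noncomputable def GraphLaplacian {n : ℕ} (ℓ : Fin n → Fin n → ℝ) :
    Matrix (Fin n) (Fin n) ℝ :=
  fun j i => if j = i then -∑ k ∈ univ.filter (· ≠ i), ℓ i k else ℓ i j

section Aux

variable {n : ℕ} (ℓ : Fin n → Fin n → ℝ)

lemma pathAction_nil : pathAction ℓ [] = 0 := by simp [pathAction]

lemma pathAction_single (a : Fin n) : pathAction ℓ [a] = 0 := by simp [pathAction]

lemma pathAction_cons (a b : Fin n) (q : List (Fin n)) :
    pathAction ℓ (a :: b :: q) = Real.log (ℓ a b / ℓ b a) + pathAction ℓ (b :: q) := by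
  simp [pathAction]

lemma pathAction_append (p q : List (Fin n)) (a b : Fin n)
    (hp : p.getLast? = some a) (hq : q.head? = some b) :
    pathAction ℓ (p ++ q) = pathAction ℓ p + Real.log (ℓ a b / ℓ b a) + pathAction ℓ q := by
  induction p with
  | nil => simp at hp
  | cons x p ih =>
    cases p with
    | nil =>
      simp at hp; subst hp
      cases q with
      | nil => simp at hq
      | cons y q =>
        simp at hq; subst hq
        rw [List.singleton_append, pathAction_cons, pathAction_single]
        ring
    | cons y p =>
      rw [List.getLast?_cons_cons] at hp
      have := ih hp
      simp only [List.cons_append] at this ⊢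
      rw [pathAction_cons, pathAction_cons, this]; ring

lemma pathAction_reverse (p : List (Fin n)) :
    pathAction ℓ p.reverse = - pathAction ℓ p := by
  induction p with
  | nil => simp [pathAction_nil]
  | cons a p ih =>
    cases p with
    | nil => simp [pathAction_single]
    | cons b p =>
      have h1 : (b :: p).reverse.getLast? = some b := by
        rw [List.getLast?_reverse]; rfl
      have h2 : (a :: b :: p).reverse = (b :: p).reverse ++ [a] := by simp
      rw [h2, pathAction_append ℓ _ [a] b a h1 rfl, ih, pathAction_single,
        pathAction_cons]
      rw [show ℓ b a / ℓ a b = (ℓ a b / ℓ b a)⁻¹ from (inv_div _ _).symm, Real.log_inv]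
      ring

lemma exists_path (hsc : StronglyConnected ℓ) (i j : Fin n) :
    ∃ q, IsPathFrom ℓ i j q := by
  have h := hsc i j
  induction h with
  | refl => exact ⟨[i], List.isChain_singleton i, rfl, rfl⟩
  | @tail b c hab e ih =>
    obtain ⟨q, hc, hh, hl⟩ := ih
    refine ⟨q ++ [c], ?_, ?_, ?_⟩
    · unfold List.Chain'; rw [List.isChain_append]
      refine ⟨hc, List.isChain_singleton c, ?_⟩
      intro x hx y hy
      simp at hy; subst hy
      rw [hl] at hx; simp at hx; subst hx; exact e
    · cases q with
      | nil => simp at hh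
      | cons z q => simpa using hh
    · simp

lemma action_step (hrev : Reversible ℓ) (hcc : CycleCondition ℓ) (r i j : Fin n)
    (hij : 0 < ℓ i j) (P Q : List (Fin n))
    (hP : IsPathFrom ℓ r i P) (hQ : IsPathFrom ℓ r j Q) :
    pathAction ℓ Q = pathAction ℓ P + Real.log (ℓ i j / ℓ j i) := by
  obtain ⟨hPc, hPh, hPl⟩ := hP
  obtain ⟨hQc, hQh, hQl⟩ := hQ
  have hQrc : Q.reverse.Chain' (IsEdge ℓ) := by
    unfold List.Chain' at hQc ⊢; rw [List.isChain_reverse]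
    exact hQc.imp (fun a b h => (hrev a b).mp h)
  have hC : (P ++ Q.reverse).Chain' (IsEdge ℓ) := by
    unfold List.Chain'; rw [List.isChain_append]
    refine ⟨hPc, hQrc, ?_⟩
    intro x hx y hy
    rw [hPl] at hx
    rw [List.head?_reverse, hQl] at hy
    simp at hx hy; subst hx; subst hy; exact hij
  have hhl : (P ++ Q.reverse).head? = (P ++ Q.reverse).getLast? := by
    have h1 : (P ++ Q.reverse).head? = some r := by
      cases P with
      | nil => simp at hPh
      | cons a P => simpa using hPh
    have h2 : (P ++ Q.reverse).getLast? = some r := by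
      have hne : Q.reverse ≠ [] := by
        cases Q with
        | nil => simp at hQh
        | cons a Q => simp
      rw [List.getLast?_append_of_ne_nil P hne, List.getLast?_reverse, hQh]
    rw [h1, h2]
  have h0 := hcc _ hC hhl
  rw [pathAction_append ℓ P Q.reverse i j hPl (by rw [List.head?_reverse, hQl]),
    pathAction_reverse] at h0
  linarith

lemma telescope (hrev : Reversible ℓ) (p : Fin n → ℝ) (hp : ∀ i, 0 < p i)
    (hdb : ∀ i j, 0 < ℓ i j → p i * ℓ i j = p j * ℓ j i) :
    ∀ (q : List (Fin n)) (a : Fin n), (a :: q).Chain' (IsEdge ℓ) →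
      pathAction ℓ (a :: q) =
        Real.log (p ((a :: q).getLast (by simp))) - Real.log (p a) := by
  intro q
  induction q with
  | nil => intro a _; simp [pathAction_single]
  | cons b q ih =>
    intro a hc
    unfold List.Chain' at hc; rw [List.isChain_cons_cons] at hc
    have hab : 0 < ℓ a b := hc.1
    have hba : 0 < ℓ b a := (hrev a b).mp hab
    have key : Real.log (ℓ a b / ℓ b a) = Real.log (p b) - Real.log (p a) := by
      have heq : ℓ a b / ℓ b a = p b / p a := by
        rw [div_eq_div_iff hba.ne' (hp a).ne']
        linarith [hdb a b hab]
      rw [heq, Real.log_div (hp b).ne' (hp a).ne']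
    rw [pathAction_cons, ih b hc.2, key]
    have hgl : (a :: b :: q).getLast (by simp) = (b :: q).getLast (by simp) := by
      rw [List.getLast_cons]
    rw [hgl]; ring

end Aux

/-- Detailed balance (a positive steady state balancing every edge with its
reverse) holds if and only if the cycle condition holds. -/
theorem detailed_balance_iff_cycle_condition {n : ℕ} (hn : 0 < n)
    (ℓ : Fin n → Fin n → ℝ) (hℓ : ∀ i j, 0 ≤ ℓ i j)
    (hsc : StronglyConnected ℓ) (hrev : Reversible ℓ) :
    (∃ p : Fin n → ℝ, (∀ i, 0 < p i) ∧ (GraphLaplacian ℓ).mulVec p = 0 ∧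
      ∀ i j, 0 < ℓ i j → p i * ℓ i j = p j * ℓ j i) ↔ CycleCondition ℓ := by
  constructor
  · rintro ⟨p, hp, _, hdb⟩ q hchain hhl
    cases q with
    | nil => simp [pathAction_nil]
    | cons a q =>
      have hne : (a :: q) ≠ [] := by simp
      rw [List.head?_cons, List.getLast?_eq_getLast hne] at hhl
      have := telescope ℓ hrev p hp hdb q a hchain
      rw [this]
      have ha : (a :: q).getLast (by simp) = a := by
        injection hhl with h; exact h.symm
      rw [ha]; ring
  · intro hcc
    set r : Fin n := ⟨0, hn⟩ with hr
    have hex : ∀ i, ∃ q, IsPathFrom ℓ r i q := fun i => exists_path ℓ hsc r i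
    choose P hP using hex
    set g : Fin n → ℝ := fun i => pathAction ℓ (P i) with hg
    have hdb : ∀ i j, 0 < ℓ i j →
        Real.exp (g i) * ℓ i j = Real.exp (g j) * ℓ j i := by
      intro i j hij
      have hji : 0 < ℓ j i := (hrev i j).mp hij
      have hstep : g j = g i + Real.log (ℓ i j / ℓ j i) :=
        action_step ℓ hrev hcc r i j hij (P i) (P j) (hP i) (hP j)
      have : Real.exp (g j) = Real.exp (g i) * (ℓ i j / ℓ j i) := by
        rw [hstep, Real.exp_add, Real.exp_log (div_pos hij hji)]
      rw [this]
      field_simp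
    have hdb' : ∀ i j, Real.exp (g i) * ℓ i j = Real.exp (g j) * ℓ j i := by
      intro i j
      by_cases h : 0 < ℓ i j
      · exact hdb i j h
      · have h1 : ℓ i j = 0 := le_antisymm (not_lt.mp h) (hℓ i j)
        have h2 : ℓ j i = 0 := by
          have : ¬ 0 < ℓ j i := fun hc => h ((hrev j i).mp hc)
          exact le_antisymm (not_lt.mp this) (hℓ j i)
        rw [h1, h2]; ring
    refine ⟨fun i => Real.exp (g i), fun i => Real.exp_pos _, ?_, fun i j hij => hdb i j hij⟩
    funext j
    show ∑ i, GraphLaplacian ℓ j i * Real.exp (g i) = 0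
    rw [← Finset.add_sum_erase univ _ (Finset.mem_univ j)]
    have h1 : GraphLaplacian ℓ j j = -∑ k ∈ univ.filter (· ≠ j), ℓ j k := by
      simp [GraphLaplacian]
    have h2 : ∀ i ∈ univ.erase j,
        GraphLaplacian ℓ j i * Real.exp (g i) = ℓ j i * Real.exp (g j) := by
      intro i hi
      have hne : j ≠ i := (Finset.ne_of_mem_erase hi).symm
      simp only [GraphLaplacian, if_neg hne]
      rw [mul_comm, hdb' i j, mul_comm]
    rw [Finset.sum_congr rfl h2, h1, Finset.filter_ne', ← Finset.sum_mul]
    ring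
end

section
/- Reformulation of the steady state: for a finite strongly connected reversible graph G with reference vertex 1, the vector with components ρ_i = ∑_{T ∈ Θ_1} Pr_{Θ_1}(T) · exp(-S(T_i)), where Pr_{Θ_1}(T) = q(T)/∑_{T'∈Θ_1} q(T') is the arboreal distribution and T_i is the unique minimal path in T from i to the root 1, lies in the kernel of the Laplacian L(G) and satisfies ρ_1 = 1. -/
open Finset

attribute [local instance] Classical.propDecidable

/-- The LabelLaplacian matrix: `L j i = ℓ i j` off the diagonal,
`L i i = -∑_{k ≠ i} ℓ i k`. -/
noncomputable def LabelLaplacian {n : ℕ} (ℓ : Fin n → Fin n → ℝ) :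
    Matrix (Fin n) (Fin n) ℝ :=
  fun j i => if j = i then -∑ k ∈ univ.filter (· ≠ i), ℓ i k else ℓ i j

namespace Arb
variable {n : ℕ}

noncomputable def depth (t : Fin n → Fin n) (r v : Fin n) : ℕ :=
  if h : ∃ k, t^[k] v = r then Nat.find h else 0

variable {t : Fin n → Fin n} {r : Fin n}

lemma depth_spec (hre : ∀ v, ∃ k, t^[k] v = r) (v : Fin n) :
    t^[depth t r v] v = r := by
  rw [depth, dif_pos (hre v)]; exact Nat.find_spec (hre v)

lemma depth_min (hre : ∀ v, ∃ k, t^[k] v = r) {v : Fin n} {k : ℕ}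
    (hk : k < depth t r v) : t^[k] v ≠ r := by
  rw [depth, dif_pos (hre v)] at hk; exact Nat.find_min (hre v) hk

lemma depth_eq (hre : ∀ v, ∃ k, t^[k] v = r) {v : Fin n} {m : ℕ}
    (h1 : t^[m] v = r) (h2 : ∀ k < m, t^[k] v ≠ r) : depth t r v = m := by
  rw [depth, dif_pos (hre v)]
  exact (Nat.find_eq_iff (hre v)).2 ⟨h1, h2⟩

lemma depth_root (hre : ∀ v, ∃ k, t^[k] v = r) : depth t r r = 0 :=
  depth_eq hre (by simp) (by simp)

lemma depth_eq_zero (hre : ∀ v, ∃ k, t^[k] v = r) {v : Fin n}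
    (h : depth t r v = 0) : v = r := by
  have := depth_spec hre v; rwa [h] at this

lemma iter_inj (hre : ∀ v, ∃ k, t^[k] v = r) {v : Fin n} {a b : ℕ}
    (ha : a ≤ depth t r v) (hb : b ≤ depth t r v)
    (hab : t^[a] v = t^[b] v) : a = b := by
  by_contra hne
  wlog hlt : a < b generalizing a b
  · exact this hb ha hab.symm (Ne.symm hne) (by omega)
  have key : t^[depth t r v - b + a] v = r := by
    have : t^[depth t r v - b] (t^[a] v) = t^[depth t r v - b] (t^[b] v) := by rw [hab]
    rw [← Function.iterate_add_apply, ← Function.iterate_add_apply] at this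
    have h2 : depth t r v - b + b = depth t r v := by omega
    rw [h2] at this
    rw [this]; exact depth_spec hre v
  exact depth_min hre (by omega) key

lemma depth_lt (hn : 0 < n) (hre : ∀ v, ∃ k, t^[k] v = r) (v : Fin n) :
    depth t r v < n := by
  have hinj : Function.Injective (fun k : Fin (depth t r v + 1) => t^[(k : ℕ)] v) := by
    intro a b hab
    exact Fin.ext (iter_inj hre (Nat.lt_succ_iff.1 a.2) (Nat.lt_succ_iff.1 b.2) hab)
  have := Fintype.card_le_of_injective _ hinj
  simpa using this

lemma depth_succ (hre : ∀ v, ∃ k, t^[k] v = r) {v : Fin n} (hv : v ≠ r) :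
    depth t r v = depth t r (t v) + 1 := by
  have hd : 0 < depth t r v := by
    rcases Nat.eq_zero_or_pos (depth t r v) with h | h
    · exact absurd (depth_eq_zero hre h) hv
    · exact h
  have h1 : t^[depth t r v - 1] (t v) = r := by
    have h := depth_spec hre v
    have e : depth t r v = depth t r v - 1 + 1 := by omega
    rw [e, Function.iterate_succ_apply] at h; exact h
  have h2 : ∀ k < depth t r v - 1, t^[k] (t v) ≠ r := by
    intro k hk hc
    apply depth_min hre (show k + 1 < depth t r v by omega)
    rw [Function.iterate_succ_apply]; exact hc
  have := depth_eq hre h1 h2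
  omega

lemma treePathAux_spec (hre : ∀ v, ∃ k, t^[k] v = r) :
    ∀ (m : ℕ) (v : Fin n), depth t r v ≤ m →
      treePathAux t r m v = (List.range (depth t r v + 1)).map (fun k => t^[k] v)
  | 0, v, h => by
    have hv : v = r := depth_eq_zero hre (Nat.le_zero.1 h)
    subst hv
    rw [depth_root hre]
    simp [treePathAux]
  | m + 1, v, h => by
    by_cases hv : v = r
    · subst hv; rw [depth_root hre]; simp [treePathAux]
    · rw [treePathAux, if_neg hv]
      have hd := depth_succ hre hv
      have : depth t r (t v) ≤ m := by omega
      rw [treePathAux_spec hre m (t v) this, hd, List.range_succ_eq_map]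
      simp [List.map_map, Function.comp_def, Function.iterate_succ_apply]

lemma treePath_eq (hn : 0 < n) (hre : ∀ v, ∃ k, t^[k] v = r) (v : Fin n) :
    treePath t r v = (List.range (depth t r v + 1)).map (fun k => t^[k] v) :=
  treePathAux_spec hre n v (le_of_lt (depth_lt hn hre v))

lemma treePath_root (hn : 0 < n) (hre : ∀ v, ∃ k, t^[k] v = r) :
    treePath t r r = [r] := by
  rw [treePath_eq hn hre, depth_root hre]; simp

lemma list_prod_range (f : ℕ → ℝ) (m : ℕ) :
    ((List.range m).map f).prod = ∏ i ∈ Finset.range m, f i := by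
  rw [Finset.prod_eq_multiset_prod]; rfl

lemma list_sum_range (f : ℕ → ℝ) (m : ℕ) :
    ((List.range m).map f).sum = ∑ i ∈ Finset.range m, f i := by
  rw [Finset.sum_eq_multiset_sum]; rfl

lemma zip_tail_map_range {α : Type*} :
    ∀ (m : ℕ) (g : ℕ → α),
      (((List.range (m+1)).map g).zip (((List.range (m+1)).map g).tail))
        = (List.range m).map (fun k => (g k, g (k+1)))
  | 0, g => by simp [show List.range 1 = [0] from rfl]
  | (m+1), g => by
    have h1 : List.range (m+1+1) = 0 :: (List.range (m+1)).map Nat.succ :=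
      List.range_succ_eq_map (n := m+1)
    have h2 : List.range (m+1) = 0 :: (List.range m).map Nat.succ :=
      List.range_succ_eq_map (n := m)
    have hL : (List.range (m+1)).map (fun k => g (Nat.succ k))
        = g 1 :: (List.range m).map (fun k => g (k+2)) := by
      rw [h2]; simp [List.map_map, Function.comp_def]
    have IH := zip_tail_map_range m (fun k => g (k+1))
    rw [hL] at IH
    rw [h1, List.map_cons, List.map_map]
    have hc : (List.range (m+1)).map (g ∘ Nat.succ)
        = g 1 :: (List.range m).map (fun k => g (k+2)) := by
      rw [h2]; simp [List.map_map, Function.comp_def]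
    rw [hc, List.tail_cons, List.zip_cons_cons]
    rw [List.tail_cons] at IH
    rw [IH]
    conv_rhs => rw [h2]
    simp [List.map_map, Function.comp_def]

/-- explicit formula for the weight of a path written as iterates -/
lemma pathWeight_map_range {n : ℕ} (ℓ : Fin n → Fin n → ℝ) (g : ℕ → Fin n) (m : ℕ) :
    pathWeight ℓ ((List.range (m+1)).map g)
      = ∏ k ∈ Finset.range m, ℓ (g k) (g (k+1)) := by
  rw [pathWeight, zip_tail_map_range, List.map_map, list_prod_range]
  rfl

lemma pathAction_map_range {n : ℕ} (ℓ : Fin n → Fin n → ℝ) (g : ℕ → Fin n) (m : ℕ) :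
    pathAction ℓ ((List.range (m+1)).map g)
      = ∑ k ∈ Finset.range m, Real.log (ℓ (g k) (g (k+1)) / ℓ (g (k+1)) (g k)) := by
  rw [pathAction, zip_tail_map_range, List.map_map, list_sum_range]
  rfl

lemma exp_neg_pathAction {n : ℕ} (ℓ : Fin n → Fin n → ℝ) (g : ℕ → Fin n) (m : ℕ)
    (hpos : ∀ k < m, 0 < ℓ (g k) (g (k+1)))
    (hpos' : ∀ k < m, 0 < ℓ (g (k+1)) (g k)) :
    Real.exp (-pathAction ℓ ((List.range (m+1)).map g))
      = ∏ k ∈ Finset.range m, (ℓ (g (k+1)) (g k) / ℓ (g k) (g (k+1))) := by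
  rw [pathAction_map_range, ← Finset.sum_neg_distrib, Real.exp_sum]
  apply Finset.prod_congr rfl
  intro k hk
  rw [Finset.mem_range] at hk
  have ha := hpos k hk
  have hb := hpos' k hk
  rw [← Real.log_inv, inv_div, Real.exp_log (by positivity)]

noncomputable def flip (t : Fin n → Fin n) (r i : Fin n) : Fin n → Fin n :=
  fun v =>
    if h : ∃ k, k + 1 ≤ depth t r i ∧ t^[k+1] i = v then t^[Nat.find h] i
    else if v = i then i else t v

variable {i : Fin n}

lemma flip_path (hre : ∀ v, ∃ k, t^[k] v = r) {k : ℕ}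
    (hk : k + 1 ≤ depth t r i) : flip t r i (t^[k+1] i) = t^[k] i := by
  have hex : ∃ k', k' + 1 ≤ depth t r i ∧ t^[k'+1] i = t^[k+1] i := ⟨k, hk, rfl⟩
  rw [flip, dif_pos hex]
  obtain ⟨h1, h2⟩ := Nat.find_spec hex
  have : Nat.find hex + 1 = k + 1 := iter_inj hre h1 hk h2
  rw [Nat.add_right_cancel this]

lemma flip_self (hre : ∀ v, ∃ k, t^[k] v = r) : flip t r i i = i := by
  rw [flip, dif_neg, if_pos rfl]
  rintro ⟨k, hk, he⟩
  have : k + 1 = 0 := iter_inj hre hk (Nat.zero_le _) (by simpa using he)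
  omega

lemma flip_off (hre : ∀ v, ∃ k, t^[k] v = r) {v : Fin n}
    (hv : ∀ k ≤ depth t r i, t^[k] i ≠ v) : flip t r i v = t v := by
  rw [flip, dif_neg, if_neg]
  · exact fun h => hv 0 (Nat.zero_le _) (by simpa using h.symm)
  · rintro ⟨k, hk, he⟩
    exact hv (k+1) hk he

lemma flip_isTree (ℓ : Fin n → Fin n → ℝ) (ht : IsSpanningTree ℓ r t)
    (hrev : Reversible ℓ) (i : Fin n) : IsSpanningTree ℓ i (flip t r i) := by
  obtain ⟨hroot, hedge, hre⟩ := ht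
  have hreach_path : ∀ k, k ≤ depth t r i → (flip t r i)^[k] (t^[k] i) = i := by
    intro k
    induction k with
    | zero => intro _; rfl
    | succ k IH =>
      intro hk
      rw [Function.iterate_succ_apply, flip_path hre hk]
      exact IH (by omega)
  refine ⟨flip_self hre, ?_, ?_⟩
  · intro v hv
    by_cases hp : ∃ k, k ≤ depth t r i ∧ t^[k] i = v
    · obtain ⟨k, hk, he⟩ := hp
      have hk0 : k ≠ 0 := by
        rintro rfl
        exact hv he.symm
      obtain ⟨k', rfl⟩ : ∃ k', k = k' + 1 := ⟨k - 1, by omega⟩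
      rw [← he, flip_path hre hk]
      have h1 : t^[k'] i ≠ r := by
        apply depth_min hre (v := i) (by omega)
      have h2 : 0 < ℓ (t^[k'] i) (t^[k'+1] i) := by
        have := hedge (t^[k'] i) h1
        rwa [← Function.iterate_succ_apply' t k' i] at this
      exact (hrev _ _).1 h2
    · push_neg at hp
      have hvr : v ≠ r := by
        intro h
        exact hp (depth t r i) le_rfl (by rw [depth_spec hre]; exact h.symm)
      rw [flip_off hre hp]
      exact hedge v hvr
  · -- reachability
    have main : ∀ N v, depth t r v ≤ N → ∃ m, (flip t r i)^[m] v = i := by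
      intro N
      induction N with
      | zero =>
        intro v hv
        have hv' : v = r := depth_eq_zero hre (Nat.le_zero.1 hv)
        refine ⟨depth t r i, ?_⟩
        have h := hreach_path (depth t r i) le_rfl
        rw [depth_spec hre i] at h
        rw [hv']
        exact h
      | succ N IH =>
        intro v hv
        by_cases hp : ∃ k, k ≤ depth t r i ∧ t^[k] i = v
        · obtain ⟨k, hk, he⟩ := hp
          exact ⟨k, by rw [← he]; exact hreach_path k hk⟩
        · push_neg at hp
          have hvr : v ≠ r := by
            intro h
            exact hp (depth t r i) le_rfl (by rw [depth_spec hre]; exact h.symm)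
          have hd : depth t r (t v) ≤ N := by
            have := depth_succ hre hvr
            omega
          obtain ⟨m, hm⟩ := IH (t v) hd
          exact ⟨m + 1, by rw [Function.iterate_succ_apply, flip_off hre hp]; exact hm⟩
    intro v
    exact main (depth t r v) v le_rfl

lemma flip_flip (ℓ : Fin n → Fin n → ℝ) (ht : IsSpanningTree ℓ r t)
    (hrev : Reversible ℓ) (i : Fin n) : flip (flip t r i) i r = t := by
  obtain ⟨hroot, hedge, hre⟩ := ht
  have hs := flip_isTree ℓ ⟨hroot, hedge, hre⟩ hrev i
  have hsre := hs.2.2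
  set s := flip t r i with hsdef
  set d := depth t r i with hd
  have hiter : ∀ k ≤ d, s^[k] r = t^[d - k] i := by
    intro k
    induction k with
    | zero =>
      intro _
      simp only [Nat.sub_zero, Function.iterate_zero_apply]
      exact (depth_spec hre i).symm
    | succ k IH =>
      intro hk
      rw [Function.iterate_succ_apply', IH (by omega)]
      have e1 : d - k = (d - (k+1)) + 1 := by omega
      rw [e1, hsdef, flip_path hre (by omega)]
  have hdep : depth s i r = d := by
    apply depth_eq hsre
    · rw [hiter d le_rfl]; simp
    · intro k hk hik
      rw [hiter k (by omega)] at hik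
      have : d - k = 0 := iter_inj hre (v := i) (a := d - k) (b := 0) (by omega)
        (Nat.zero_le _) (by simpa using hik)
      omega
  funext v
  by_cases hp : ∃ j, j ≤ d ∧ t^[j] i = v
  · obtain ⟨j, hj, he⟩ := hp
    by_cases hjd : j = d
    · -- v = r
      have hvr : v = r := by rw [← he, hjd, depth_spec hre]
      subst hvr
      rw [flip, dif_neg, if_pos rfl, hroot]
      rintro ⟨k, hk, hke⟩
      rw [hdep] at hk
      rw [hiter (k+1) hk] at hke
      have : d - (k+1) = d := iter_inj hre (by omega) le_rfl
        (by rw [hke, depth_spec hre])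
      omega
    · -- j < d
      have hjd' : j < d := lt_of_le_of_ne hj hjd
      have hex : ∃ k, k + 1 ≤ depth s i r ∧ s^[k+1] r = v := by
        refine ⟨d - j - 1, by omega, ?_⟩
        have e1 : d - j - 1 + 1 = d - j := by omega
        rw [e1, hiter (d - j) (by omega)]
        have e2 : d - (d - j) = j := by omega
        rw [e2, he]
      rw [flip, dif_pos hex]
      obtain ⟨h1, h2⟩ := Nat.find_spec hex
      generalize hm : Nat.find hex = m at h1 h2 ⊢
      rw [hdep] at h1
      rw [hiter (m + 1) h1] at h2
      have e3 : d - (m + 1) = j := by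
        apply iter_inj hre (v := i) (by omega) hj
        rw [h2, he]
      have e4 : d - m = j + 1 := by omega
      have e5 := hiter m (by omega)
      rw [e4] at e5
      rw [← he, e5]
      exact Function.iterate_succ_apply' t j i
  · push_neg at hp
    have hvr : v ≠ r := fun h =>
      hp d le_rfl (by rw [depth_spec hre]; exact h.symm)
    have hvi : v ≠ i := fun h => hp 0 (Nat.zero_le _) (by simpa using h.symm)
    rw [flip, dif_neg, if_neg hvr, hsdef, flip_off hre hp]
    rintro ⟨k, hk, hke⟩
    rw [hdep] at hk
    rw [hiter (k+1) hk] at hke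
    exact hp _ (by omega) hke

lemma flip_weight (hn : 0 < n) (ℓ : Fin n → Fin n → ℝ) (ht : IsSpanningTree ℓ r t)
    (hrev : Reversible ℓ) (i : Fin n) :
    treeWeight ℓ r t * Real.exp (-pathAction ℓ (treePath t r i))
      = treeWeight ℓ i (flip t r i) := by
  obtain ⟨hroot, hedge, hre⟩ := ht
  set d := depth t r i with hd
  have epos : ∀ k < d, 0 < ℓ (t^[k] i) (t^[k+1] i) := by
    intro k hk
    have h1 : t^[k] i ≠ r := depth_min hre (by omega)
    have := hedge _ h1
    rwa [← Function.iterate_succ_apply' t k i] at this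
  have epos' : ∀ k < d, 0 < ℓ (t^[k+1] i) (t^[k] i) := fun k hk => (hrev _ _).1 (epos k hk)
  rw [treePath_eq hn hre i, ← hd, exp_neg_pathAction ℓ _ d epos epos']
  set Off : Finset (Fin n) := univ.filter (fun v => ∀ k ≤ d, t^[k] i ≠ v) with hOff
  have hdisj1 : Disjoint ((Finset.range d).image (fun k => t^[k] i)) Off := by
    rw [Finset.disjoint_left]
    intro v hv hv'
    simp only [Finset.mem_image, Finset.mem_range] at hv
    obtain ⟨k, hk, he⟩ := hv
    rw [hOff, Finset.mem_filter] at hv'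
    exact hv'.2 k (by omega) he
  have hdisj2 : Disjoint ((Finset.range d).image (fun k => t^[k+1] i)) Off := by
    rw [Finset.disjoint_left]
    intro v hv hv'
    simp only [Finset.mem_image, Finset.mem_range] at hv
    obtain ⟨k, hk, he⟩ := hv
    rw [hOff, Finset.mem_filter] at hv'
    exact hv'.2 (k+1) (by omega) he
  have hset1 : univ.filter (· ≠ r) = (Finset.range d).image (fun k => t^[k] i) ∪ Off := by
    ext v
    simp only [Finset.mem_filter, Finset.mem_union, Finset.mem_image, Finset.mem_range,
      Finset.mem_univ, true_and, hOff]
    constructor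
    · intro hv
      by_cases hp : ∃ k, k ≤ d ∧ t^[k] i = v
      · obtain ⟨k, hk, he⟩ := hp
        left
        refine ⟨k, ?_, he⟩
        rcases lt_or_eq_of_le hk with h | h
        · exact h
        · exfalso; apply hv; rw [← he, h, hd]; exact depth_spec hre i
      · right
        push_neg at hp
        exact fun k hk => hp k hk
    · rintro (⟨k, hk, he⟩ | hv)
      · intro hvr
        apply depth_min hre (show k < depth t r i from by omega) (v := i)
        rw [he, hvr]
      · intro hvr
        apply hv d le_rfl
        rw [hd, depth_spec hre i, hvr]
  have hset2 : univ.filter (· ≠ i) = (Finset.range d).image (fun k => t^[k+1] i) ∪ Off := by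
    ext v
    simp only [Finset.mem_filter, Finset.mem_union, Finset.mem_image, Finset.mem_range,
      Finset.mem_univ, true_and, hOff]
    constructor
    · intro hv
      by_cases hp : ∃ k, k ≤ d ∧ t^[k] i = v
      · obtain ⟨k, hk, he⟩ := hp
        have hk0 : k ≠ 0 := by
          rintro rfl
          exact hv he.symm
        left
        exact ⟨k - 1, by omega, by rw [show k - 1 + 1 = k from by omega]; exact he⟩
      · right
        push_neg at hp
        exact fun k hk => hp k hk
    · rintro (⟨k, hk, he⟩ | hv)
      · intro hvi
        have : k + 1 = 0 := iter_inj hre (v := i) (by omega) (Nat.zero_le _)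
          (by rw [he, hvi]; simp)
        omega
      · intro hvi
        exact hv 0 (Nat.zero_le _) (by simpa using hvi.symm)
  have hprod1 : ∏ v ∈ (Finset.range d).image (fun k => t^[k] i), ℓ v (t v)
      = ∏ k ∈ Finset.range d, ℓ (t^[k] i) (t^[k+1] i) := by
    rw [Finset.prod_image]
    · exact Finset.prod_congr rfl fun k _ => by
        rw [Function.iterate_succ_apply' t k i]
    · intro a ha b hb hab
      rw [Finset.coe_range, Set.mem_Iio] at ha hb
      exact iter_inj hre (v := i) (by omega) (by omega) hab
  have hprod2 : ∏ v ∈ (Finset.range d).image (fun k => t^[k+1] i), ℓ v (flip t r i v)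
      = ∏ k ∈ Finset.range d, ℓ (t^[k+1] i) (t^[k] i) := by
    rw [Finset.prod_image]
    · exact Finset.prod_congr rfl fun k hk => by
        rw [flip_path hre (by rw [Finset.mem_range] at hk; omega)]
    · intro a ha b hb hab
      rw [Finset.coe_range, Set.mem_Iio] at ha hb
      have := iter_inj hre (v := i) (a := a+1) (b := b+1) (by omega) (by omega) hab
      omega
  have hoff : ∏ v ∈ Off, ℓ v (flip t r i v) = ∏ v ∈ Off, ℓ v (t v) := by
    apply Finset.prod_congr rfl
    intro v hv
    rw [hOff, Finset.mem_filter] at hv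
    rw [flip_off hre hv.2]
  rw [treeWeight, treeWeight, hset1, hset2, Finset.prod_union hdisj1,
    Finset.prod_union hdisj2, hprod1, hprod2, hoff, mul_right_comm]
  congr 1
  rw [← Finset.prod_mul_distrib]
  apply Finset.prod_congr rfl
  intro k hk
  rw [Finset.mem_range] at hk
  rw [mul_comm, div_mul_cancel₀]
  exact ne_of_gt (epos k hk)

lemma treeWeight_pos (ℓ : Fin n → Fin n → ℝ) (hℓ : ∀ a b, 0 ≤ ℓ a b)
    (ht : IsSpanningTree ℓ r t) : 0 < treeWeight ℓ r t := by
  unfold treeWeight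
  apply Finset.prod_pos
  intro v hv
  rw [Finset.mem_filter] at hv
  exact ht.2.1 v hv.2

lemma sum_flip (hn : 0 < n) (ℓ : Fin n → Fin n → ℝ) (hrev : Reversible ℓ)
    (r i : Fin n) :
    ∑ T ∈ Trees ℓ r, treeWeight ℓ r T * Real.exp (-pathAction ℓ (treePath T r i))
      = ∑ T ∈ Trees ℓ i, treeWeight ℓ i T := by
  apply Finset.sum_nbij' (fun T => flip T r i) (fun T => flip T i r)
  · intro T hT
    rw [Trees, Finset.mem_filter] at hT ⊢
    exact ⟨Finset.mem_univ _, flip_isTree ℓ hT.2 hrev i⟩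
  · intro T hT
    rw [Trees, Finset.mem_filter] at hT ⊢
    exact ⟨Finset.mem_univ _, flip_isTree ℓ hT.2 hrev r⟩
  · intro T hT
    rw [Trees, Finset.mem_filter] at hT
    exact flip_flip ℓ hT.2 hrev i
  · intro T hT
    rw [Trees, Finset.mem_filter] at hT
    exact flip_flip ℓ hT.2 hrev r
  · intro T hT
    rw [Trees, Finset.mem_filter] at hT
    exact flip_weight hn ℓ hT.2 hrev i

lemma iterate_update_eq (f : Fin n → Fin n) (p y x : Fin n) :
    ∀ a, (∀ m, m < a → f^[m] x ≠ p) → (Function.update f p y)^[a] x = f^[a] x := by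
  intro a
  induction a with
  | zero => intro _; rfl
  | succ a IH =>
    intro h
    rw [Function.iterate_succ_apply', Function.iterate_succ_apply',
      IH (fun m hm => h m (by omega)), Function.update_of_ne (h a (by omega))]

lemma tree_no_fix {T : Fin n → Fin n} {i : Fin n} (ℓ : Fin n → Fin n → ℝ)
    (ht : IsSpanningTree ℓ i T) {v : Fin n} (hv : v ≠ i) : T v ≠ v := by
  intro hc
  obtain ⟨k, hk⟩ := ht.2.2 v
  exact hv ((Function.iterate_fixed hc k) ▸ hk)

lemma update_isTree {f : Fin n → Fin n} (ℓ : Fin n → Fin n → ℝ)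
    (hedge : ∀ v, 0 < ℓ v (f v)) (p : Fin n)
    (hre : ∀ v, ∃ k, f^[k] v = p) :
    IsSpanningTree ℓ p (Function.update f p p) := by
  refine ⟨Function.update_self _ _ _, ?_, ?_⟩
  · intro v hv
    rw [Function.update_of_ne hv]
    exact hedge v
  · intro v
    refine ⟨Nat.find (hre v), ?_⟩
    rw [iterate_update_eq f p p v _ (fun m hm => Nat.find_min (hre v) hm)]
    exact Nat.find_spec (hre v)

lemma update_reach' {t : Fin n → Fin n} {p : Fin n} (y : Fin n)
    (hre : ∀ v, ∃ k, t^[k] v = p) (v : Fin n) :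
    ∃ k, (Function.update t p y)^[k] v = p :=
  ⟨Nat.find (hre v), by
    rw [iterate_update_eq t p y v _ (fun m hm => Nat.find_min (hre v) hm)]
    exact Nat.find_spec (hre v)⟩

lemma update_reach {t : Fin n → Fin n} {p : Fin n} (j : Fin n)
    (hre : ∀ v, ∃ k, t^[k] v = p) (v : Fin n) :
    ∃ k, (Function.update t p j)^[k] v = j :=
  ⟨Nat.find (hre v) + 1, by
    rw [Function.iterate_succ_apply',
      iterate_update_eq t p j v _ (fun m hm => Nat.find_min (hre v) hm),
      Nat.find_spec (hre v), Function.update_self]⟩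

noncomputable def pre (f : Fin n → Fin n) (j : Fin n) : Fin n :=
  if h : ∃ k, f^[k+1] j = j then f^[Nat.find h] j else j

lemma pre_spec {f : Fin n → Fin n} {j : Fin n} (h : ∃ k, f^[k+1] j = j) :
    f (pre f j) = j := by
  rw [pre, dif_pos h]
  have hs := Nat.find_spec h
  rwa [Function.iterate_succ_apply'] at hs

lemma pre_ne {f : Fin n → Fin n} {j : Fin n} (h : ∃ k, f^[k+1] j = j)
    (hfix : f j ≠ j) : pre f j ≠ j := by
  rw [pre, dif_pos h]
  intro hc
  have h1 : Nat.find h ≠ 0 := fun h0 => hfix (by have := Nat.find_spec h; rwa [h0] at this)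
  apply Nat.find_min h (show Nat.find h - 1 < Nat.find h by omega)
  rw [show Nat.find h - 1 + 1 = Nat.find h by omega]
  exact hc

lemma cyc_exists {f : Fin n → Fin n} {j : Fin n} (hre : ∀ v, ∃ k, f^[k] v = j) :
    ∃ k, f^[k+1] j = j := by
  obtain ⟨k, hk⟩ := hre (f j)
  exact ⟨k, by rw [Function.iterate_succ_apply]; exact hk⟩

lemma pre_reach {f : Fin n → Fin n} {j : Fin n} (hre : ∀ v, ∃ k, f^[k] v = j)
    (v : Fin n) : ∃ k, f^[k] v = pre f j := by
  have h := cyc_exists hre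
  obtain ⟨b, hb⟩ := hre v
  refine ⟨Nat.find h + b, ?_⟩
  rw [Function.iterate_add_apply, hb, pre, dif_pos h]

/-- pre of an updated tree recovers the original root. -/
lemma pre_update {T : Fin n → Fin n} {i j : Fin n} (ℓ : Fin n → Fin n → ℝ)
    (ht : IsSpanningTree ℓ i T) (hij : i ≠ j) :
    pre (Function.update T i j) j = i := by
  have hre := ht.2.2
  set f := Function.update T i j with hf
  set b := depth T i j with hb
  have hagree : ∀ m, m ≤ b → f^[m] j = T^[m] j := by
    intro m hm
    apply iterate_update_eq
    intro k hk
    exact depth_min hre (by omega)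
  have hcyc : ∃ k, f^[k+1] j = j := by
    refine ⟨b, ?_⟩
    rw [Function.iterate_succ_apply', hagree b le_rfl, depth_spec hre j, hf,
      Function.update_self]
  have hfind : Nat.find hcyc = b := by
    apply (Nat.find_eq_iff hcyc).2
    constructor
    · rw [Function.iterate_succ_apply', hagree b le_rfl, depth_spec hre j, hf,
        Function.update_self]
    · intro k hk hc
      rw [hagree (k+1) (by omega)] at hc
      have : k + 1 = 0 := iter_inj hre (v := j) (by omega) (Nat.zero_le _) (by simpa using hc)
      omega
  rw [pre, dif_pos hcyc, hfind, hagree b le_rfl, hb, depth_spec hre j]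

lemma prod_update (ℓ : Fin n → Fin n → ℝ) (T : Fin n → Fin n) (i y : Fin n) :
    ∏ v, ℓ v (Function.update T i y v)
      = ℓ i y * ∏ v ∈ univ.filter (· ≠ i), ℓ v (T v) := by
  have h := Finset.mul_prod_erase univ (fun v => ℓ v (Function.update T i y v))
    (Finset.mem_univ i)
  rw [← h]
  simp only [Function.update_self]
  congr 1
  rw [Finset.filter_ne']
  apply Finset.prod_congr rfl
  intro v hv
  show ℓ v (Function.update T i y v) = ℓ v (T v)
  rw [Function.update_of_ne (Finset.ne_of_mem_erase hv)]

noncomputable def Fns (ℓ : Fin n → Fin n → ℝ) (j : Fin n) : Finset (Fin n → Fin n) :=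
  univ.filter (fun f => (∀ v, f v ≠ v) ∧ (∀ v, 0 < ℓ v (f v)) ∧ (∀ v, ∃ k, f^[k] v = j))

lemma sumL (ℓ : Fin n → Fin n → ℝ) (j : Fin n) :
    ∑ x ∈ (univ.filter (fun i => i ≠ j ∧ 0 < ℓ i j)).sigma
        (fun i => Trees ℓ i),
      ℓ x.1 j * treeWeight ℓ x.1 x.2
      = ∑ f ∈ Fns ℓ j, ∏ v, ℓ v (f v) := by
  refine Finset.sum_nbij' (fun x => Function.update x.2 x.1 j)
    (fun f => ⟨pre f j, Function.update f (pre f j) (pre f j)⟩) ?_ ?_ ?_ ?_ ?_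
  · rintro ⟨i, T⟩ hx
    rw [Finset.mem_sigma, Finset.mem_filter, Trees, Finset.mem_filter] at hx
    obtain ⟨⟨-, hij, hpos⟩, -, hT⟩ := hx
    dsimp only at hij hpos hT ⊢
    rw [Fns, Finset.mem_filter]
    refine ⟨Finset.mem_univ _, ?_, ?_, update_reach j hT.2.2⟩
    · intro v
      by_cases hv : v = i
      · subst hv
        rw [Function.update_self]
        exact fun h => hij h.symm
      · rw [Function.update_of_ne hv]
        exact tree_no_fix ℓ hT hv
    · intro v
      by_cases hv : v = i
      · subst hv
        rw [Function.update_self]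
        exact hpos
      · rw [Function.update_of_ne hv]
        exact hT.2.1 v hv
  · intro f hf
    rw [Fns, Finset.mem_filter] at hf
    obtain ⟨-, hfix, hpos, hre⟩ := hf
    have hcyc := cyc_exists hre
    have hpj : pre f j ≠ j := pre_ne hcyc (hfix j)
    rw [Finset.mem_sigma, Finset.mem_filter, Trees, Finset.mem_filter]
    refine ⟨⟨Finset.mem_univ _, hpj, ?_⟩, Finset.mem_univ _, ?_⟩
    · have := hpos (pre f j)
      rwa [pre_spec hcyc] at this
    · exact update_isTree ℓ hpos (pre f j) (pre_reach hre)
  · rintro ⟨i, T⟩ hx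
    rw [Finset.mem_sigma, Finset.mem_filter, Trees, Finset.mem_filter] at hx
    obtain ⟨⟨-, hij, hpos⟩, -, hT⟩ := hx
    dsimp only at hij hpos hT ⊢
    have hp : pre (Function.update T i j) j = i := pre_update ℓ hT hij
    have h2 : Function.update (Function.update T i j) i i = T := by
      rw [Function.update_idem]
      have h3 := Function.update_eq_self i T
      rwa [hT.1] at h3
    refine Sigma.ext hp (heq_of_eq ?_)
    show Function.update (Function.update T i j)
        (pre (Function.update T i j) j) (pre (Function.update T i j) j) = T
    rw [hp, h2]
  · intro f hf
    rw [Fns, Finset.mem_filter] at hf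
    obtain ⟨-, hfix, hpos, hre⟩ := hf
    have hcyc := cyc_exists hre
    show Function.update (Function.update f (pre f j) (pre f j)) (pre f j) j = f
    rw [Function.update_idem]
    have h3 := Function.update_eq_self (pre f j) f
    rwa [pre_spec hcyc] at h3
  · rintro ⟨i, T⟩ hx
    rw [prod_update, treeWeight]

lemma sumR (ℓ : Fin n → Fin n → ℝ) (j : Fin n) :
    ∑ x ∈ (univ.filter (fun k => k ≠ j ∧ 0 < ℓ j k)).sigma
        (fun _ => Trees ℓ j),
      ℓ j x.1 * treeWeight ℓ j x.2
      = ∑ f ∈ Fns ℓ j, ∏ v, ℓ v (f v) := by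
  refine Finset.sum_nbij' (fun x => Function.update x.2 j x.1)
    (fun f => ⟨f j, Function.update f j j⟩) ?_ ?_ ?_ ?_ ?_
  · rintro ⟨k, T⟩ hx
    rw [Finset.mem_sigma, Finset.mem_filter, Trees, Finset.mem_filter] at hx
    obtain ⟨⟨-, hkj, hpos⟩, -, hT⟩ := hx
    dsimp only at hkj hpos hT ⊢
    rw [Fns, Finset.mem_filter]
    refine ⟨Finset.mem_univ _, ?_, ?_, update_reach' k hT.2.2⟩
    · intro v
      by_cases hv : v = j
      · subst hv
        rw [Function.update_self]
        exact hkj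
      · rw [Function.update_of_ne hv]
        exact tree_no_fix ℓ hT hv
    · intro v
      by_cases hv : v = j
      · subst hv
        rw [Function.update_self]
        exact hpos
      · rw [Function.update_of_ne hv]
        exact hT.2.1 v hv
  · intro f hf
    rw [Fns, Finset.mem_filter] at hf
    obtain ⟨-, hfix, hpos, hre⟩ := hf
    rw [Finset.mem_sigma, Finset.mem_filter, Trees, Finset.mem_filter]
    exact ⟨⟨Finset.mem_univ _, hfix j, hpos j⟩, Finset.mem_univ _,
      update_isTree ℓ hpos j hre⟩
  · rintro ⟨k, T⟩ hx
    rw [Finset.mem_sigma, Finset.mem_filter, Trees, Finset.mem_filter] at hx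
    obtain ⟨⟨-, hkj, hpos⟩, -, hT⟩ := hx
    dsimp only at hkj hpos hT ⊢
    have h1 : Function.update T j k j = k := Function.update_self _ _ _
    refine Sigma.ext h1 (heq_of_eq ?_)
    show Function.update (Function.update T j k) j j = T
    rw [Function.update_idem]
    have h3 := Function.update_eq_self j T
    rwa [hT.1] at h3
  · intro f hf
    show Function.update (Function.update f j j) j (f j) = f
    rw [Function.update_idem, Function.update_eq_self]

  · rintro ⟨k, T⟩ hx
    rw [prod_update, treeWeight]

lemma balance (ℓ : Fin n → Fin n → ℝ) (hℓ : ∀ a b, 0 ≤ ℓ a b) (j : Fin n) :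
    ∑ i ∈ univ.filter (· ≠ j), ℓ i j * (∑ T ∈ Trees ℓ i, treeWeight ℓ i T)
      = (∑ k ∈ univ.filter (· ≠ j), ℓ j k) * ∑ T ∈ Trees ℓ j, treeWeight ℓ j T := by
  have hsubL : univ.filter (fun i => i ≠ j ∧ 0 < ℓ i j) ⊆ univ.filter (· ≠ j) := by
    intro x hx
    rw [Finset.mem_filter] at hx ⊢
    exact ⟨hx.1, hx.2.1⟩
  have hsubR : univ.filter (fun k => k ≠ j ∧ 0 < ℓ j k) ⊆ univ.filter (· ≠ j) := by
    intro x hx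
    rw [Finset.mem_filter] at hx ⊢
    exact ⟨hx.1, hx.2.1⟩
  have hL : (∑ i ∈ univ.filter (fun i => i ≠ j ∧ 0 < ℓ i j),
        ℓ i j * (∑ T ∈ Trees ℓ i, treeWeight ℓ i T))
      = ∑ i ∈ univ.filter (· ≠ j), ℓ i j * (∑ T ∈ Trees ℓ i, treeWeight ℓ i T) := by
    apply Finset.sum_subset hsubL
    intro x hx hx'
    rw [Finset.mem_filter] at hx hx'
    have hz : ℓ x j = 0 := by
      rcases (hℓ x j).lt_or_eq with h | h
      · exact absurd ⟨hx.1, hx.2, h⟩ hx'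
      · exact h.symm
    rw [hz, zero_mul]
  have hR : (∑ k ∈ univ.filter (fun k => k ≠ j ∧ 0 < ℓ j k),
        ℓ j k * (∑ T ∈ Trees ℓ j, treeWeight ℓ j T))
      = ∑ k ∈ univ.filter (· ≠ j), ℓ j k * (∑ T ∈ Trees ℓ j, treeWeight ℓ j T) := by
    apply Finset.sum_subset hsubR
    intro x hx hx'
    rw [Finset.mem_filter] at hx hx'
    have hz : ℓ j x = 0 := by
      rcases (hℓ j x).lt_or_eq with h | h
      · exact absurd ⟨hx.1, hx.2, h⟩ hx'
      · exact h.symm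
    rw [hz, zero_mul]
  have e1 : ∑ i ∈ univ.filter (fun i => i ≠ j ∧ 0 < ℓ i j),
      ℓ i j * (∑ T ∈ Trees ℓ i, treeWeight ℓ i T)
      = ∑ x ∈ (univ.filter (fun i => i ≠ j ∧ 0 < ℓ i j)).sigma (fun i => Trees ℓ i),
          ℓ x.1 j * treeWeight ℓ x.1 x.2 := by
    rw [Finset.sum_sigma]
    exact Finset.sum_congr rfl fun i _ => Finset.mul_sum _ _ _
  have e2 : ∑ k ∈ univ.filter (fun k => k ≠ j ∧ 0 < ℓ j k),
      ℓ j k * (∑ T ∈ Trees ℓ j, treeWeight ℓ j T)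
      = ∑ x ∈ (univ.filter (fun k => k ≠ j ∧ 0 < ℓ j k)).sigma (fun _ => Trees ℓ j),
          ℓ j x.1 * treeWeight ℓ j x.2 := by
    rw [Finset.sum_sigma]
    exact Finset.sum_congr rfl fun i _ => Finset.mul_sum _ _ _
  rw [← hL, Finset.sum_mul, ← hR, e1, sumL, e2, sumR]

lemma trees_nonempty (ℓ : Fin n → Fin n → ℝ) (hsc : StronglyConnected ℓ)
    (r : Fin n) : ∃ t, IsSpanningTree ℓ r t := by
  have hex : ∀ v : Fin n, ∃ m, ∃ l : List (Fin n), l.length = m ∧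
      List.Chain (IsEdge ℓ) v l ∧ (v :: l).getLast (by simp) = r := by
    intro v
    obtain ⟨l, hc, hl⟩ := List.exists_isChain_cons_of_relationReflTransGen (hsc v r)
    exact ⟨l.length, l, rfl, hc, hl⟩
  have key : ∀ v, v ≠ r → ∃ u, 0 < ℓ v u ∧ Nat.find (hex u) < Nat.find (hex v) := by
    intro v hv
    obtain ⟨l, hlen, hc, hlast⟩ := Nat.find_spec (hex v)
    cases l with
    | nil =>
      exfalso
      apply hv
      simpa using hlast
    | cons u l' =>
      unfold List.Chain at hc
      rw [List.chain_cons] at hc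
      refine ⟨u, hc.1, ?_⟩
      have hlast' : (u :: l').getLast (by simp) = r := by
        rw [List.getLast_cons (by simp)] at hlast
        exact hlast
      have hle : Nat.find (hex u) ≤ l'.length :=
        Nat.find_le ⟨l', rfl, hc.2, hlast'⟩
      have hlen' : l'.length + 1 = Nat.find (hex v) := by
        simpa using hlen
      omega
  choose u hu hlt using key
  refine ⟨fun v => if h : v = r then r else u v h, dif_pos rfl, ?_, ?_⟩
  · intro v hv
    show 0 < ℓ v (if h : v = r then r else u v h)
    rw [dif_neg hv]
    exact hu v hv
  · have main : ∀ N v, Nat.find (hex v) ≤ N →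
        ∃ k, (fun v => if h : v = r then r else u v h)^[k] v = r := by
      intro N
      induction N with
      | zero =>
        intro v hv
        obtain ⟨l, hlen, hc, hlast⟩ := Nat.find_spec (hex v)
        have h0 : l.length = 0 := by omega
        have hl : l = [] := List.length_eq_zero_iff.1 h0
        subst hl
        exact ⟨0, by simpa using hlast⟩
      | succ N IH =>
        intro v hv
        by_cases hvr : v = r
        · exact ⟨0, hvr⟩
        · have hlt' := hlt v hvr
          obtain ⟨k, hk⟩ := IH (u v hvr) (by omega)
          refine ⟨k + 1, ?_⟩
          rw [Function.iterate_succ_apply]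
          simpa [dif_neg hvr] using hk
    intro v
    exact main (Nat.find (hex v)) v le_rfl

lemma pathAction_singleton (ℓ : Fin n → Fin n → ℝ) (v : Fin n) :
    pathAction ℓ [v] = 0 := by
  simp [pathAction]

lemma treesSum_pos (ℓ : Fin n → Fin n → ℝ) (hℓ : ∀ a b, 0 ≤ ℓ a b)
    (hsc : StronglyConnected ℓ) (r : Fin n) :
    0 < ∑ T ∈ Trees ℓ r, treeWeight ℓ r T := by
  obtain ⟨t, ht⟩ := trees_nonempty ℓ hsc r
  have htm : t ∈ Trees ℓ r := by
    rw [Trees, Finset.mem_filter]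
    exact ⟨Finset.mem_univ _, ht⟩
  apply Finset.sum_pos'
  · intro T hT
    rw [Trees, Finset.mem_filter] at hT
    exact le_of_lt (treeWeight_pos ℓ hℓ hT.2)
  · exact ⟨t, htm, treeWeight_pos ℓ hℓ ht⟩

end Arb

/-- Reformulation of the steady state: the vector
`ρ_i = ∑_{T ∈ Θ_1} Pr_{Θ_1}(T) · exp (-S(T_i))`, an average over the arboreal
distribution, lies in the kernel of the LabelLaplacian and satisfies `ρ_1 = 1`. -/
theorem arboreal_reformulation {n : ℕ} (hn : 0 < n) (ℓ : Fin n → Fin n → ℝ)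
    (hℓ : ∀ i j, 0 ≤ ℓ i j) (hsc : StronglyConnected ℓ) (hrev : Reversible ℓ) :
    (LabelLaplacian ℓ).mulVec (fun i =>
      ∑ T ∈ Trees ℓ ⟨0, hn⟩,
        (treeWeight ℓ ⟨0, hn⟩ T / ∑ T' ∈ Trees ℓ ⟨0, hn⟩, treeWeight ℓ ⟨0, hn⟩ T') *
          Real.exp (-pathAction ℓ (treePath T ⟨0, hn⟩ i))) = 0 ∧
    (∑ T ∈ Trees ℓ ⟨0, hn⟩,
        (treeWeight ℓ ⟨0, hn⟩ T / ∑ T' ∈ Trees ℓ ⟨0, hn⟩, treeWeight ℓ ⟨0, hn⟩ T') *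
          Real.exp (-pathAction ℓ (treePath T ⟨0, hn⟩ ⟨0, hn⟩))) = 1 := by
  set r : Fin n := ⟨0, hn⟩ with hr
  set Q : ℝ := ∑ T' ∈ Trees ℓ r, treeWeight ℓ r T' with hQ
  have hQpos : 0 < Q := Arb.treesSum_pos ℓ hℓ hsc r
  have hrho : ∀ i, (∑ T ∈ Trees ℓ r,
      (treeWeight ℓ r T / Q) * Real.exp (-pathAction ℓ (treePath T r i)))
      = (∑ T ∈ Trees ℓ i, treeWeight ℓ i T) / Q := by
    intro i
    rw [← Arb.sum_flip hn ℓ hrev r i, Finset.sum_div]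
    exact Finset.sum_congr rfl fun T _ => by ring
  have key : ∀ j, ∑ i, LabelLaplacian ℓ j i * ((∑ T ∈ Trees ℓ i, treeWeight ℓ i T) / Q) = 0 := by
    intro j
    rw [← Finset.add_sum_erase univ _ (Finset.mem_univ j)]
    have hjj : LabelLaplacian ℓ j j = -∑ k ∈ univ.filter (· ≠ j), ℓ j k := by
      simp [LabelLaplacian]
    have hcongr : ∑ i ∈ univ.erase j,
        LabelLaplacian ℓ j i * ((∑ T ∈ Trees ℓ i, treeWeight ℓ i T) / Q)
        = ∑ i ∈ univ.erase j, ℓ i j * ((∑ T ∈ Trees ℓ i, treeWeight ℓ i T) / Q) := by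
      apply Finset.sum_congr rfl
      intro i hi
      have hij : i ≠ j := Finset.ne_of_mem_erase hi
      have : LabelLaplacian ℓ j i = ℓ i j := by
        simp [LabelLaplacian, Ne.symm hij]
      rw [this]
    rw [hjj, hcongr, ← Finset.filter_ne' univ j]
    have e : ∑ i ∈ univ.filter (· ≠ j),
        ℓ i j * ((∑ T ∈ Trees ℓ i, treeWeight ℓ i T) / Q)
        = (∑ i ∈ univ.filter (· ≠ j),
            ℓ i j * (∑ T ∈ Trees ℓ i, treeWeight ℓ i T)) / Q := by
      rw [Finset.sum_div]
      exact Finset.sum_congr rfl fun i _ => by ring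
    rw [e, Arb.balance ℓ hℓ j]
    ring
  constructor
  · funext j
    show (∑ i, LabelLaplacian ℓ j i * _) = 0
    calc ∑ i, LabelLaplacian ℓ j i * (∑ T ∈ Trees ℓ r,
          (treeWeight ℓ r T / Q) * Real.exp (-pathAction ℓ (treePath T r i)))
        = ∑ i, LabelLaplacian ℓ j i * ((∑ T ∈ Trees ℓ i, treeWeight ℓ i T) / Q) :=
          Finset.sum_congr rfl fun i _ => by rw [hrho i]
      _ = 0 := key j
  · have hone : ∀ T ∈ Trees ℓ r,
        (treeWeight ℓ r T / Q) * Real.exp (-pathAction ℓ (treePath T r r))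
          = treeWeight ℓ r T / Q := by
      intro T hT
      rw [Trees, Finset.mem_filter] at hT
      rw [Arb.treePath_root hn hT.2.2.2, Arb.pathAction_singleton, neg_zero,
        Real.exp_zero, mul_one]
    rw [Finset.sum_congr rfl hone, ← Finset.sum_div]
    exact div_self (ne_of_gt hQpos)
end

section
/- For a finite strongly connected reversible graph G, the vector with components ρ̃_i(G) = ∑_{T ∈ Θ_1} exp(-S(T_i)) q(T) is equal to the Matrix-Tree vector, i.e., ρ̃_i(G) = ∑_{T' ∈ Θ_i} q(T') for every vertex i. -/
open Finset

attribute [local instance] Classical.propDecidable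

/-- The Laplacian matrix: `L j i = ℓ i j` off the diagonal,
`L i i = -∑_{k ≠ i} ℓ i k`. -/
noncomputable def labelLaplacian {n : ℕ} (ℓ : Fin n → Fin n → ℝ) :
    Matrix (Fin n) (Fin n) ℝ :=
  fun j i => if j = i then -∑ k ∈ univ.filter (· ≠ i), ℓ i k else ℓ i j

noncomputable def tDist {n : ℕ} (t : Fin n → Fin n) (r v : Fin n) : ℕ :=
  sInf {k | t^[k] v = r}

section Aux

variable {n : ℕ} {ℓ : Fin n → Fin n → ℝ} {r : Fin n} {t : Fin n → Fin n}

lemma tDist_le {v : Fin n} {k : ℕ} (h : t^[k] v = r) : tDist t r v ≤ k :=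
  Nat.sInf_le h

lemma iterate_tDist_ne {v : Fin n} {k : ℕ} (h : k < tDist t r v) : t^[k] v ≠ r :=
  fun he => absurd (tDist_le he) (Nat.not_le.2 h)

lemma tDist_spec (ht : IsSpanningTree ℓ r t) (v : Fin n) :
    t^[tDist t r v] v = r :=
  Nat.sInf_mem (ht.2.2 v)

lemma tDist_eq_zero_iff (ht : IsSpanningTree ℓ r t) {v : Fin n} :
    tDist t r v = 0 ↔ v = r := by
  constructor
  · intro h
    have h2 := tDist_spec ht v
    rwa [h, Function.iterate_zero_apply] at h2
  · rintro rfl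
    exact Nat.le_zero.1 (tDist_le (by simp))

lemma tDist_iterate (ht : IsSpanningTree ℓ r t) {v : Fin n} {m : ℕ}
    (hm : m ≤ tDist t r v) : tDist t r (t^[m] v) = tDist t r v - m := by
  have h1 : t^[tDist t r v - m] (t^[m] v) = r := by
    rw [← Function.iterate_add_apply, Nat.sub_add_cancel hm]
    exact tDist_spec ht v
  refine le_antisymm (tDist_le h1) ?_
  by_contra h
  push_neg at h
  have h2 := tDist_spec ht (t^[m] v)
  rw [← Function.iterate_add_apply] at h2
  exact iterate_tDist_ne (by omega) h2

lemma tDist_iterate_inj (ht : IsSpanningTree ℓ r t) {v : Fin n} {a b : ℕ}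
    (ha : a ≤ tDist t r v) (hb : b ≤ tDist t r v) (h : t^[a] v = t^[b] v) :
    a = b := by
  have h1 := tDist_iterate ht ha
  have h2 := tDist_iterate ht hb
  rw [h, h2] at h1
  omega

lemma tDist_lt (ht : IsSpanningTree ℓ r t) (v : Fin n) : tDist t r v < n := by
  have hinj : Function.Injective (fun m : Fin (tDist t r v + 1) => t^[m.1] v) := by
    intro a b hab
    exact Fin.ext (tDist_iterate_inj ht (Nat.lt_succ_iff.1 a.2) (Nat.lt_succ_iff.1 b.2) hab)
  have h2 : tDist t r v + 1 ≤ n := by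
    simpa using Fintype.card_le_of_injective _ hinj
  omega

lemma tDist_succ (ht : IsSpanningTree ℓ r t) {v : Fin n} (hv : v ≠ r) :
    tDist t r (t v) = tDist t r v - 1 := by
  have h0 : tDist t r v ≠ 0 := fun h => hv ((tDist_eq_zero_iff ht).1 h)
  have h1 := tDist_iterate ht (v := v) (m := 1) (by omega)
  simpa using h1

lemma treePathAux_eq (ht : IsSpanningTree ℓ r t) :
    ∀ (k : ℕ) (v : Fin n), tDist t r v ≤ k →
      treePathAux t r k v = (List.range (tDist t r v + 1)).map (fun m => t^[m] v)
  | 0, v, hk => by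
      have h0 : tDist t r v = 0 := Nat.le_zero.1 hk
      rw [h0]
      simp [treePathAux]
  | k + 1, v, hk => by
      by_cases hv : v = r
      · have h0 : tDist t r v = 0 := (tDist_eq_zero_iff ht).2 hv
        simp only [treePathAux]
        rw [if_pos hv, h0]
        simp
      · have h0 : tDist t r v ≠ 0 := fun h => hv ((tDist_eq_zero_iff ht).1 h)
        have hs : tDist t r (t v) = tDist t r v - 1 := tDist_succ ht hv
        have IH := treePathAux_eq ht k (t v) (by omega)
        have hd : tDist t r v + 1 = (tDist t r (t v) + 1) + 1 := by omega
        have hR : (List.range (tDist t r v + 1)).map (fun m => t^[m] v)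
            = v :: (List.range (tDist t r (t v) + 1)).map (fun m => t^[m] (t v)) := by
          rw [hd, List.range_succ_eq_map, List.map_cons, List.map_map]
          simp only [Function.iterate_zero_apply]
          congr 1
        rw [hR]
        simp only [treePathAux]
        rw [if_neg hv, IH]

lemma treePath_eq (ht : IsSpanningTree ℓ r t) (v : Fin n) :
    treePath t r v = (List.range (tDist t r v + 1)).map (fun m => t^[m] v) :=
  treePathAux_eq ht n v (le_of_lt (tDist_lt ht v))

lemma mem_treePath (ht : IsSpanningTree ℓ r t) {j v : Fin n} :
    v ∈ treePath t r j ↔ ∃ m ≤ tDist t r j, t^[m] j = v := by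
  rw [treePath_eq ht j]
  constructor
  · intro hv
    obtain ⟨m, hm, he⟩ := List.mem_map.1 hv
    rw [List.mem_range] at hm
    exact ⟨m, by omega, he⟩
  · rintro ⟨m, hm, he⟩
    exact List.mem_map.2 ⟨m, List.mem_range.2 (by omega), he⟩

lemma tail_map' {α β : Type*} (f : α → β) (l : List α) :
    (l.map f).tail = l.tail.map f := by
  cases l <;> simp

lemma zip_tail_range' : ∀ (len s : ℕ),
    (List.range' s (len + 1)).zip ((List.range' s (len + 1)).tail) =
      (List.range' s len).map (fun m => (m, m + 1))
  | 0, s => by simp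
  | len + 1, s => by
      have IH := zip_tail_range' len (s + 1)
      rw [List.range'_succ (s := s + 1) (n := len) (step := 1)] at IH
      simp only [List.tail_cons] at IH
      rw [List.range'_succ (s := s) (n := len + 1) (step := 1), List.range'_succ (s := s) (n := len) (step := 1),
        List.range'_succ (s := s + 1) (n := len) (step := 1)]
      simp only [List.tail_cons, List.zip_cons_cons, List.map_cons]
      rw [IH]

lemma treePath_zip (ht : IsSpanningTree ℓ r t) (j : Fin n) :
    (treePath t r j).zip (treePath t r j).tail =
      (List.range (tDist t r j)).map (fun m => (t^[m] j, t^[m + 1] j)) := by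
  rw [treePath_eq ht j, tail_map', List.zip_map, List.range_eq_range',
    List.range_eq_range', zip_tail_range', List.map_map]
  apply List.map_congr_left
  intro m _
  rfl

lemma reverseTree_apply_edge (ht : IsSpanningTree ℓ r t) {j : Fin n} {m : ℕ}
    (hm : m < tDist t r j) :
    reverseTree t r j (t^[m + 1] j) = t^[m] j := by
  have hzip := treePath_zip ht j
  have hmem : (t^[m] j, t^[m + 1] j) ∈ (List.range (tDist t r j)).map
      (fun m => (t^[m] j, t^[m + 1] j)) :=
    List.mem_map.2 ⟨m, List.mem_range.2 hm, rfl⟩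
  have hsome : (((treePath t r j).zip (treePath t r j).tail).find?
      (fun e => e.2 == t^[m + 1] j)).isSome := by
    rw [hzip, List.find?_isSome]
    exact ⟨_, hmem, by simp⟩
  obtain ⟨e, he⟩ := Option.isSome_iff_exists.1 hsome
  have h1 := List.find?_some he
  have h2 := List.mem_of_find?_eq_some he
  rw [hzip] at h2
  obtain ⟨m', hm', rfl⟩ := List.mem_map.1 h2
  rw [List.mem_range] at hm'
  simp only [beq_iff_eq] at h1
  have hmm : m' + 1 = m + 1 :=
    tDist_iterate_inj ht (v := j) (by omega) (by omega) h1
  have hmm' : m' = m := by omega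
  subst hmm'
  simp only [reverseTree, he, Option.elim]

lemma reverseTree_apply_of_forall (ht : IsSpanningTree ℓ r t) {j v : Fin n}
    (hv : ∀ m < tDist t r j, t^[m + 1] j ≠ v) :
    reverseTree t r j v = if v = j then j else t v := by
  have hnone : ((treePath t r j).zip (treePath t r j).tail).find?
      (fun e => e.2 == v) = none := by
    rw [treePath_zip ht j, List.find?_eq_none]
    intro e he
    obtain ⟨m, hm, rfl⟩ := List.mem_map.1 he
    simp only [beq_iff_eq]
    exact hv m (List.mem_range.1 hm)
  simp only [reverseTree, hnone, Option.elim]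

lemma reverseTree_root (ht : IsSpanningTree ℓ r t) (j : Fin n) :
    reverseTree t r j j = j := by
  have h : ∀ m < tDist t r j, t^[m + 1] j ≠ j := by
    intro m hm he
    have h2 : m + 1 = 0 :=
      tDist_iterate_inj ht (v := j) (by omega) (by omega) (by simpa using he)
    omega
  rw [reverseTree_apply_of_forall ht h, if_pos rfl]

lemma reverseTree_off (ht : IsSpanningTree ℓ r t) {j v : Fin n}
    (hv : v ∉ treePath t r j) : reverseTree t r j v = t v := by
  have hj : v ≠ j := by
    rintro rfl
    exact hv ((mem_treePath ht).2 ⟨0, Nat.zero_le _, by simp⟩)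
  have h : ∀ m < tDist t r j, t^[m + 1] j ≠ v := by
    intro m hm he
    exact hv ((mem_treePath ht).2 ⟨m + 1, by omega, he⟩)
  rw [reverseTree_apply_of_forall ht h, if_neg hj]

lemma reverseTree_iterate (ht : IsSpanningTree ℓ r t) (j : Fin n) :
    ∀ k, k ≤ tDist t r j →
      (reverseTree t r j)^[k] r = t^[tDist t r j - k] j
  | 0, _ => by simpa using (tDist_spec ht j).symm
  | k + 1, hk => by
      have IH := reverseTree_iterate ht j k (by omega)
      rw [Function.iterate_succ_apply', IH]
      have h1 : tDist t r j - k = (tDist t r j - (k + 1)) + 1 := by omega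
      rw [h1, reverseTree_apply_edge ht (by omega)]

lemma reverseTree_isSpanningTree (hrev : Reversible ℓ) (ht : IsSpanningTree ℓ r t)
    (j : Fin n) : IsSpanningTree ℓ j (reverseTree t r j) := by
  refine ⟨reverseTree_root ht j, ?_, ?_⟩
  · intro v hv
    by_cases hvt : ∃ m < tDist t r j, t^[m + 1] j = v
    · obtain ⟨m, hm, rfl⟩ := hvt
      rw [reverseTree_apply_edge ht hm]
      refine (hrev _ _).1 ?_
      rw [Function.iterate_succ_apply']
      exact ht.2.1 _ (iterate_tDist_ne hm)
    · push_neg at hvt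
      rw [reverseTree_apply_of_forall ht hvt, if_neg hv]
      apply ht.2.1
      intro hvr
      rcases Nat.eq_zero_or_pos (tDist t r j) with h0 | h0
      · exact hv (hvr.trans ((tDist_eq_zero_iff ht).1 h0).symm)
      · apply hvt (tDist t r j - 1) (by omega)
        have h1 : tDist t r j - 1 + 1 = tDist t r j := by omega
        rw [h1, tDist_spec ht j]
        exact hvr.symm
  · have hA : ∀ m, m ≤ tDist t r j → (reverseTree t r j)^[m] (t^[m] j) = j := by
      intro m
      induction m with
      | zero => intro _; simp
      | succ m IH =>
        intro hm
        rw [Function.iterate_succ_apply, reverseTree_apply_edge ht (by omega)]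
        exact IH (by omega)
    have hB : ∀ N v, tDist t r v ≤ N → ∃ k, (reverseTree t r j)^[k] v = j := by
      intro N
      induction N with
      | zero =>
        intro v hv0
        have hvr : v = r := (tDist_eq_zero_iff ht).1 (Nat.le_zero.1 hv0)
        rw [hvr]
        exact ⟨tDist t r j, by simpa using reverseTree_iterate ht j _ le_rfl⟩
      | succ N IH =>
        intro v hvN
        by_cases hmem : v ∈ treePath t r j
        · obtain ⟨m, hm, rfl⟩ := (mem_treePath ht).1 hmem
          exact ⟨m, hA m hm⟩
        · have hvr : v ≠ r := by
            rintro rfl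
            exact hmem ((mem_treePath ht).2 ⟨_, le_rfl, tDist_spec ht j⟩)
          have h0 : tDist t r v ≠ 0 := fun h => hvr ((tDist_eq_zero_iff ht).1 h)
          have hd1 := tDist_succ ht hvr
          obtain ⟨k, hk⟩ := IH (t v) (by omega)
          exact ⟨k + 1, by rw [Function.iterate_succ_apply, reverseTree_off ht hmem, hk]⟩
    intro v
    exact hB (tDist t r v) v le_rfl

lemma tDist_reverseTree (hrev : Reversible ℓ) (ht : IsSpanningTree ℓ r t) (j : Fin n) :
    tDist (reverseTree t r j) j r = tDist t r j := by
  have hd : (reverseTree t r j)^[tDist t r j] r = j := by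
    simpa using reverseTree_iterate ht j _ le_rfl
  refine le_antisymm (tDist_le hd) ?_
  by_contra h
  push_neg at h
  have hs := reverseTree_isSpanningTree hrev ht j
  have h2 := tDist_spec hs r
  rw [reverseTree_iterate ht j _ (le_of_lt h)] at h2
  have h3 : tDist t r j - tDist (reverseTree t r j) j r = 0 :=
    tDist_iterate_inj ht (v := j) (by omega) (by omega) (by simpa using h2)
  omega

lemma reverseTree_reverseTree (hrev : Reversible ℓ) (ht : IsSpanningTree ℓ r t)
    (j : Fin n) : reverseTree (reverseTree t r j) j r = t := by
  have hs := reverseTree_isSpanningTree hrev ht j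
  have hdd := tDist_reverseTree hrev ht j
  funext v
  by_cases hmem : ∃ m < tDist t r j, t^[m] j = v
  · obtain ⟨m, hm, rfl⟩ := hmem
    have hk : tDist t r j - m - 1 < tDist (reverseTree t r j) j r := by omega
    have h1 := reverseTree_apply_edge hs hk
    rw [reverseTree_iterate ht j (tDist t r j - m - 1 + 1) (by omega),
      reverseTree_iterate ht j (tDist t r j - m - 1) (by omega)] at h1
    have e1 : tDist t r j - (tDist t r j - m - 1 + 1) = m := by omega
    have e2 : tDist t r j - (tDist t r j - m - 1) = m + 1 := by omega
    rw [e1, e2] at h1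
    rw [h1, Function.iterate_succ_apply']
  · push_neg at hmem
    have hforall : ∀ k < tDist (reverseTree t r j) j r,
        (reverseTree t r j)^[k + 1] r ≠ v := by
      intro k hk he
      rw [hdd] at hk
      rw [reverseTree_iterate ht j (k + 1) (by omega)] at he
      exact hmem _ (by omega) he
    rw [reverseTree_apply_of_forall hs hforall]
    by_cases hvr : v = r
    · rw [if_pos hvr, hvr, ht.1]
    · rw [if_neg hvr]
      apply reverseTree_off ht
      intro hmem2
      obtain ⟨m, hm, he⟩ := (mem_treePath ht).1 hmem2
      rcases Nat.lt_or_ge m (tDist t r j) with h | h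
      · exact hmem m h he
      · have hmd : m = tDist t r j := by omega
        rw [hmd, tDist_spec ht j] at he
        exact hvr he.symm

lemma weight_decomp_t (ht : IsSpanningTree ℓ r t) (j : Fin n) :
    treeWeight ℓ r t =
      (∏ m ∈ Finset.range (tDist t r j), ℓ (t^[m] j) (t^[m + 1] j)) *
      ∏ v ∈ univ.filter (fun v => v ∉ treePath t r j), ℓ v (t v) := by
  have hset : univ.filter (· ≠ r) =
      ((Finset.range (tDist t r j)).image (fun m => t^[m] j)) ∪
        univ.filter (fun v => v ∉ treePath t r j) := by
    ext v
    simp only [mem_filter, mem_union, mem_image, mem_univ, true_and, Finset.mem_range]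
    constructor
    · intro hv
      by_cases hmem : v ∈ treePath t r j
      · left
        obtain ⟨m, hm, he⟩ := (mem_treePath ht).1 hmem
        refine ⟨m, ?_, he⟩
        rcases eq_or_lt_of_le hm with h | h
        · exfalso
          apply hv
          rw [← he, h]
          exact tDist_spec ht j
        · exact h
      · right; exact hmem
    · rintro (⟨m, hm, rfl⟩ | hmem)
      · intro he
        have h2 : m = tDist t r j :=
          tDist_iterate_inj ht (v := j) (by omega) le_rfl (by rw [he, tDist_spec ht j])
        omega
      · rintro rfl
        exact hmem ((mem_treePath ht).2 ⟨_, le_rfl, tDist_spec ht j⟩)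
  have hdisj : Disjoint ((Finset.range (tDist t r j)).image (fun m => t^[m] j))
      (univ.filter (fun v => v ∉ treePath t r j)) := by
    rw [Finset.disjoint_left]
    intro v hv hv2
    obtain ⟨m, hm, rfl⟩ := Finset.mem_image.1 hv
    rw [Finset.mem_range] at hm
    exact (Finset.mem_filter.1 hv2).2 ((mem_treePath ht).2 ⟨m, by omega, rfl⟩)
  rw [treeWeight, hset, Finset.prod_union hdisj]
  congr 1
  have hinj : ∀ a ∈ Finset.range (tDist t r j), ∀ b ∈ Finset.range (tDist t r j),
      t^[a] j = t^[b] j → a = b := by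
    intro a ha b hb hab
    rw [Finset.mem_range] at ha hb
    exact tDist_iterate_inj ht (v := j) (by omega) (by omega) hab
  rw [Finset.prod_image hinj]
  apply Finset.prod_congr rfl
  intro m _
  rw [Function.iterate_succ_apply']

lemma weight_decomp_s (hrev : Reversible ℓ) (ht : IsSpanningTree ℓ r t) (j : Fin n) :
    treeWeight ℓ j (reverseTree t r j) =
      (∏ m ∈ Finset.range (tDist t r j), ℓ (t^[m + 1] j) (t^[m] j)) *
      ∏ v ∈ univ.filter (fun v => v ∉ treePath t r j), ℓ v (t v) := by
  have hset : univ.filter (· ≠ j) =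
      ((Finset.range (tDist t r j)).image (fun m => t^[m + 1] j)) ∪
        univ.filter (fun v => v ∉ treePath t r j) := by
    ext v
    simp only [mem_filter, mem_union, mem_image, mem_univ, true_and, Finset.mem_range]
    constructor
    · intro hv
      by_cases hmem : v ∈ treePath t r j
      · left
        obtain ⟨m, hm, he⟩ := (mem_treePath ht).1 hmem
        have hm0 : m ≠ 0 := by
          rintro rfl
          exact hv (by simpa using he.symm)
        refine ⟨m - 1, by omega, ?_⟩
        have h1 : m - 1 + 1 = m := by omega
        rw [h1]
        exact he
      · right; exact hmem
    · rintro (⟨m, hm, rfl⟩ | hmem)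
      · intro he
        have h2 : m + 1 = 0 :=
          tDist_iterate_inj ht (v := j) (by omega) (by omega) (by simpa using he)
        omega
      · rintro rfl
        exact hmem ((mem_treePath ht).2 ⟨0, Nat.zero_le _, by simp⟩)
  have hdisj : Disjoint ((Finset.range (tDist t r j)).image (fun m => t^[m + 1] j))
      (univ.filter (fun v => v ∉ treePath t r j)) := by
    rw [Finset.disjoint_left]
    intro v hv hv2
    obtain ⟨m, hm, rfl⟩ := Finset.mem_image.1 hv
    rw [Finset.mem_range] at hm
    exact (Finset.mem_filter.1 hv2).2 ((mem_treePath ht).2 ⟨m + 1, by omega, rfl⟩)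
  rw [treeWeight, hset, Finset.prod_union hdisj]
  congr 1
  · have hinj : ∀ a ∈ Finset.range (tDist t r j), ∀ b ∈ Finset.range (tDist t r j),
        t^[a + 1] j = t^[b + 1] j → a = b := by
      intro a ha b hb hab
      rw [Finset.mem_range] at ha hb
      have := tDist_iterate_inj ht (v := j) (a := a + 1) (b := b + 1) (by omega) (by omega) hab
      omega
    rw [Finset.prod_image hinj]
    apply Finset.prod_congr rfl
    intro m hm
    rw [Finset.mem_range] at hm
    rw [reverseTree_apply_edge ht hm]
  · apply Finset.prod_congr rfl
    intro v hv
    rw [reverseTree_off ht (Finset.mem_filter.1 hv).2]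

lemma pathAction_treePath (ht : IsSpanningTree ℓ r t) (j : Fin n) :
    pathAction ℓ (treePath t r j) =
      ∑ m ∈ Finset.range (tDist t r j),
        Real.log (ℓ (t^[m] j) (t^[m + 1] j) / ℓ (t^[m + 1] j) (t^[m] j)) := by
  rw [pathAction, treePath_zip ht j, List.map_map]
  rfl

lemma exp_weight (hrev : Reversible ℓ) (ht : IsSpanningTree ℓ r t) (j : Fin n) :
    Real.exp (-pathAction ℓ (treePath t r j)) * treeWeight ℓ r t =
      treeWeight ℓ j (reverseTree t r j) := by
  have ha : ∀ m < tDist t r j, 0 < ℓ (t^[m] j) (t^[m + 1] j) := by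
    intro m hm
    rw [Function.iterate_succ_apply']
    exact ht.2.1 _ (iterate_tDist_ne hm)
  have hb : ∀ m < tDist t r j, 0 < ℓ (t^[m + 1] j) (t^[m] j) :=
    fun m hm => (hrev _ _).1 (ha m hm)
  rw [pathAction_treePath ht j, weight_decomp_t ht j, weight_decomp_s hrev ht j,
    ← mul_assoc]
  congr 1
  have h1 : -∑ m ∈ Finset.range (tDist t r j),
      Real.log (ℓ (t^[m] j) (t^[m + 1] j) / ℓ (t^[m + 1] j) (t^[m] j)) =
      ∑ m ∈ Finset.range (tDist t r j),
        Real.log (ℓ (t^[m + 1] j) (t^[m] j) / ℓ (t^[m] j) (t^[m + 1] j)) := by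
    rw [← Finset.sum_neg_distrib]
    apply Finset.sum_congr rfl
    intro m _
    rw [← inv_div, Real.log_inv, neg_neg]
  rw [h1, Real.exp_sum, ← Finset.prod_mul_distrib]
  apply Finset.prod_congr rfl
  intro m hm
  rw [Finset.mem_range] at hm
  rw [Real.exp_log (div_pos (hb m hm) (ha m hm)),
    div_mul_cancel₀ _ (ne_of_gt (ha m hm))]

end Aux

/-- `ρ̃_i = ∑_{T ∈ Θ_1} exp (-S(T_i)) q(T)` coincides with the Matrix-Tree


vector `∑_{T' ∈ Θ_i} q(T')`. -/
theorem tilde_rho_eq_matrix_tree {n : ℕ} (hn : 0 < n) (ℓ : Fin n → Fin n → ℝ)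
    (hℓ : ∀ i j, 0 ≤ ℓ i j) (hsc : StronglyConnected ℓ) (hrev : Reversible ℓ)
    (i : Fin n) :
    ∑ T ∈ Trees ℓ ⟨0, hn⟩,
        Real.exp (-pathAction ℓ (treePath T ⟨0, hn⟩ i)) * treeWeight ℓ ⟨0, hn⟩ T =
      ∑ T' ∈ Trees ℓ i, treeWeight ℓ i T' := by
  apply Finset.sum_nbij' (i := fun T => reverseTree T ⟨0, hn⟩ i)
    (j := fun S => reverseTree S i ⟨0, hn⟩)
  · intro T hT
    exact Finset.mem_filter.2 ⟨Finset.mem_univ _,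
      reverseTree_isSpanningTree hrev (Finset.mem_filter.1 hT).2 i⟩
  · intro S hS
    exact Finset.mem_filter.2 ⟨Finset.mem_univ _,
      reverseTree_isSpanningTree hrev (Finset.mem_filter.1 hS).2 ⟨0, hn⟩⟩
  · intro T hT
    exact reverseTree_reverseTree hrev (Finset.mem_filter.1 hT).2 i
  · intro S hS
    exact reverseTree_reverseTree hrev (Finset.mem_filter.1 hS).2 ⟨0, hn⟩
  · intro T hT
    exact exp_weight hrev (Finset.mem_filter.1 hT).2 i
end

section
/- Jarzynski-type identity over minimal paths: for a finite strongly connected reversible graph G with reference vertex 1, ∑_{m ∈ M(i,1)} Pr(m) · exp(-S(m)) = ρ_i(G), where Pr(m) = ∑_{T ∈ Θ_1, T_i = m} Pr_{Θ_1}(T) and ρ_i(G) = (∑_{T ∈ Θ_i} q(T)) / (∑_{T ∈ Θ_1} q(T)). In particular the weighted average ∑_m Pr(m) e^{-S(m)} is proportional to the steady-state probability of state i. -/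
open Finset

attribute [local instance] Classical.propDecidable

/-- The Laplacian matrix: `L j i = ℓ i j` off the diagonal,
`L i i = -∑_{k ≠ i} ℓ i k`. -/
noncomputable def LaplacianMatrix {n : ℕ} (ℓ : Fin n → Fin n → ℝ) :
    Matrix (Fin n) (Fin n) ℝ :=
  fun j i => if j = i then -∑ k ∈ univ.filter (· ≠ i), ℓ i k else ℓ i j

namespace Jar
variable {n : ℕ}

lemma treePathAux_fuel (t : Fin n → Fin n) (r : Fin n) :
    ∀ fuel k i, k ≤ fuel → t^[k] i = r → treePathAux t r fuel i = treePathAux t r k i := by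
  intro fuel
  induction fuel with
  | zero => intro k i hk _; interval_cases k; rfl
  | succ f ih =>
    intro k i hk hik
    by_cases hir : i = r
    · subst hir
      cases k with
      | zero => simp [treePathAux]
      | succ k => simp [treePathAux]
    · cases k with
      | zero => simp only [Function.iterate_zero, id_eq] at hik; exact absurd hik hir
      | succ k =>
        simp only [treePathAux, if_neg hir, List.cons.injEq, true_and]
        exact ih k (t i) (Nat.le_of_succ_le_succ hk)
          (by rw [← Function.iterate_succ_apply]; exact hik)

noncomputable def dep (t : Fin n → Fin n) (r i : Fin n) : ℕ :=
  if h : ∃ k, t^[k] i = r then Nat.find h else 0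

lemma dep_spec {t : Fin n → Fin n} {r i : Fin n} (h : ∃ k, t^[k] i = r) :
    t^[dep t r i] i = r := by
  rw [dep, dif_pos h]; exact Nat.find_spec h

lemma dep_min {t : Fin n → Fin n} {r i : Fin n} (h : ∃ k, t^[k] i = r) :
    ∀ j < dep t r i, t^[j] i ≠ r := by
  intro j hj
  rw [dep, dif_pos h] at hj
  exact Nat.find_min h hj

lemma iter_inj {t : Fin n → Fin n} {r i : Fin n} (h : ∃ k, t^[k] i = r) :
    ∀ a b, a ≤ dep t r i → b ≤ dep t r i → t^[a] i = t^[b] i → a = b := by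
  have key : ∀ a b, a < b → b ≤ dep t r i → t^[a] i = t^[b] i → False := by
    intro a b hab hb heq
    have h1 : t^[dep t r i - b + a] i = r := by
      have : t^[dep t r i - b] (t^[b] i) = r := by
        rw [← Function.iterate_add_apply, Nat.sub_add_cancel hb]; exact dep_spec h
      rw [← heq, ← Function.iterate_add_apply] at this
      exact this
    exact dep_min h _ (by omega) h1
  intro a b ha hb heq
  rcases lt_trichotomy a b with hlt | he | hgt
  · exact absurd (key a b hlt hb heq) (by simp)
  · exact he
  · exact absurd (key b a hgt ha heq.symm) (by simp)

lemma dep_lt {t : Fin n → Fin n} {r i : Fin n} (h : ∃ k, t^[k] i = r) :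
    dep t r i < n := by
  have hinj : ∀ a ∈ Finset.range (dep t r i + 1), ∀ b ∈ Finset.range (dep t r i + 1),
      t^[a] i = t^[b] i → a = b := by
    intro a ha b hb
    simp only [Finset.mem_range, Nat.lt_succ_iff] at ha hb
    exact iter_inj h a b ha hb
  have := Finset.card_le_card_of_injOn (fun j => t^[j] i)
    (fun a _ => Finset.mem_univ _) (fun a ha b hb => hinj a ha b hb)
  simpa [Finset.card_range, Finset.card_univ, Nat.succ_le_iff] using this

lemma treePathAux_min_eq_map (t : Fin n → Fin n) (r : Fin n) :
    ∀ k i, (∀ j < k, t^[j] i ≠ r) → t^[k] i = r →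
      treePathAux t r k i = (List.range (k+1)).map (fun j => t^[j] i) := by
  intro k
  induction k with
  | zero => intro i _ _; simp [treePathAux]
  | succ k ih =>
    intro i hmin hik
    have hir : i ≠ r := by simpa using hmin 0 (Nat.succ_pos k)
    have h2 : ∀ j < k, t^[j] (t i) ≠ r := by
      intro j hj
      rw [← Function.iterate_succ_apply]
      exact hmin (j+1) (by omega)
    have h3 : t^[k] (t i) = r := by
      rw [← Function.iterate_succ_apply]; exact hik
    simp only [treePathAux, if_neg hir, ih (t i) h2 h3]
    rw [List.range_succ_eq_map (n := k+1)]
    simp [List.map_map, Function.comp_def, Function.iterate_succ_apply]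

lemma treePath_eq {t : Fin n → Fin n} {r i : Fin n} (h : ∃ k, t^[k] i = r) :
    treePath t r i = (List.range (dep t r i + 1)).map (fun j => t^[j] i) := by
  rw [treePath, treePathAux_fuel t r n (dep t r i) i (le_of_lt (dep_lt h)) (dep_spec h)]
  exact treePathAux_min_eq_map t r _ i (dep_min h) (dep_spec h)

lemma zip_tail_map_range {α : Type*} :
    ∀ (k : ℕ) (f : ℕ → α),
      (((List.range (k+1)).map f).zip ((List.range (k+1)).map f).tail) =
        (List.range k).map (fun j => (f j, f (j+1)))
  | 0, f => by simp [List.range_succ]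
  | (k+1), f => by
    have ih := zip_tail_map_range k (fun j => f (j+1))
    have hM : (List.range (k+1+1)).map f
        = f 0 :: (List.range (k+1)).map (fun j => f (j+1)) := by
      rw [List.range_succ_eq_map]
      simp [List.map_map, Function.comp_def]
    have hM2 : (List.range (k+1)).map (fun j => f (j+1))
        = f 1 :: (List.range k).map (fun j => f (j+2)) := by
      rw [List.range_succ_eq_map]
      simp [List.map_map, Function.comp_def]
    rw [hM]
    simp only [List.tail_cons]
    rw [hM2] at ih ⊢
    simp only [List.tail_cons] at ih
    rw [List.zip_cons_cons, ih]
    conv_rhs => rw [List.range_succ_eq_map (n := k)]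
    simp [List.map_map, Function.comp_def]

end Jar

namespace Jar
variable {n : ℕ} {ℓ : Fin n → Fin n → ℝ} {r : Fin n} {t : Fin n → Fin n}

lemma dep_le {i : Fin n} (h : ∃ k, t^[k] i = r) {k : ℕ} (hk : t^[k] i = r) :
    dep t r i ≤ k := by
  rw [dep, dif_pos h]; exact Nat.find_le hk

lemma edges_eq {i : Fin n} (h : ∃ k, t^[k] i = r) :
    (treePath t r i).zip (treePath t r i).tail
      = (List.range (dep t r i)).map (fun m => (t^[m] i, t^[m+1] i)) := by
  rw [treePath_eq h, zip_tail_map_range]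

lemma treePath_head {i : Fin n} (h : ∃ k, t^[k] i = r) :
    (treePath t r i).head? = some i := by
  rw [treePath_eq h, List.range_succ_eq_map]
  simp

lemma treePath_last {i : Fin n} (h : ∃ k, t^[k] i = r) :
    (treePath t r i).getLast? = some r := by
  rw [treePath_eq h, List.range_succ, List.map_append]
  simp [List.getLast?_concat, dep_spec h]

lemma treePath_mem {i v : Fin n} (h : ∃ k, t^[k] i = r) :
    v ∈ treePath t r i ↔ ∃ m ≤ dep t r i, t^[m] i = v := by
  rw [treePath_eq h]
  simp only [List.mem_map, List.mem_range, Nat.lt_succ_iff]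

lemma treePath_nodup {i : Fin n} (h : ∃ k, t^[k] i = r) :
    (treePath t r i).Nodup := by
  rw [treePath_eq h]
  exact List.Nodup.map_on
    (fun a ha b hb hab => iter_inj h a b
      (Nat.lt_succ_iff.mp (List.mem_range.mp ha))
      (Nat.lt_succ_iff.mp (List.mem_range.mp hb)) hab)
    List.nodup_range

lemma treePath_chain (ht : IsSpanningTree ℓ r t) (i : Fin n) :
    (treePath t r i).Chain' (IsEdge ℓ) := by
  have h := ht.2.2 i
  rw [treePath_eq h]
  unfold List.Chain'
  rw [List.isChain_map]
  rw [List.isChain_range_succ]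
  intro m hm
  have h1 : t^[m] i ≠ r := dep_min h m hm
  have h2 : t^[m+1] i = t (t^[m] i) := Function.iterate_succ_apply' t m i
  rw [h2]
  exact ht.2.1 _ h1

lemma treePath_isMinPath (ht : IsSpanningTree ℓ r t) (i : Fin n) :
    IsMinPathFrom ℓ i r (treePath t r i) :=
  ⟨⟨treePath_chain ht i, treePath_head (ht.2.2 i), treePath_last (ht.2.2 i)⟩,
    treePath_nodup (ht.2.2 i)⟩

/-! ### reverseTree -/

lemma revT_on_path {j : Fin n} (h : ∃ k, t^[k] j = r) {m : ℕ} (hm : m < dep t r j) :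
    reverseTree t r j (t^[m+1] j) = t^[m] j := by
  unfold reverseTree
  rw [edges_eq h]
  have hex : ∃ e ∈ (List.range (dep t r j)).map (fun m => (t^[m] j, t^[m+1] j)),
      (fun e => e.2 == t^[m+1] j) e = true := by
    refine ⟨(t^[m] j, t^[m+1] j), ?_, by simp⟩
    simp only [List.mem_map, List.mem_range]
    exact ⟨m, hm, rfl⟩
  obtain ⟨e, he⟩ := Option.isSome_iff_exists.mp (List.find?_isSome.mpr hex)
  have hmem := List.mem_of_find?_eq_some he
  simp only [List.mem_map, List.mem_range] at hmem
  obtain ⟨a, ha, hae⟩ := hmem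
  have hpred := List.find?_some he
  rw [← hae] at hpred
  have : a + 1 = m + 1 := iter_inj h _ _ ha hm (by simpa using hpred)
  have ham : a = m := by omega
  subst ham
  rw [he, ← hae]
  rfl

lemma revT_off_path {j v : Fin n} (h : ∃ k, t^[k] j = r)
    (hv : ∀ m ≤ dep t r j, t^[m] j ≠ v) :
    reverseTree t r j v = t v := by
  unfold reverseTree
  rw [edges_eq h]
  have hnone : (List.find? (fun e => e.2 == v)
      ((List.range (dep t r j)).map (fun m => (t^[m] j, t^[m+1] j)))) = none := by
    rw [List.find?_eq_none]
    intro e he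
    simp only [List.mem_map, List.mem_range] at he
    obtain ⟨a, ha, hae⟩ := he
    rw [← hae]
    simp only [beq_iff_eq]
    exact hv (a+1) ha
  rw [hnone]
  have hvj : v ≠ j := fun hvj => hv 0 (Nat.zero_le _) (by simp [hvj])
  simp [Option.elim, hvj]

lemma revT_root {j : Fin n} (h : ∃ k, t^[k] j = r) :
    reverseTree t r j j = j := by
  unfold reverseTree
  rw [edges_eq h]
  have hnone : (List.find? (fun e => e.2 == j)
      ((List.range (dep t r j)).map (fun m => (t^[m] j, t^[m+1] j)))) = none := by
    rw [List.find?_eq_none]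
    intro e he
    simp only [List.mem_map, List.mem_range] at he
    obtain ⟨a, ha, hae⟩ := he
    rw [← hae]
    simp only [beq_iff_eq]
    intro hcon
    have : a + 1 = 0 := iter_inj h _ _ ha (Nat.zero_le _) (by simpa using hcon)
    omega
  rw [hnone]
  simp [Option.elim]

lemma revT_iter_path {j : Fin n} (h : ∃ k, t^[k] j = r) :
    ∀ m, m ≤ dep t r j → (reverseTree t r j)^[m] (t^[m] j) = j := by
  intro m
  induction m with
  | zero => intro _; simp
  | succ m ih =>
    intro hm
    rw [Function.iterate_succ_apply, revT_on_path h (by omega)]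
    exact ih (by omega)

lemma dep_t_lt {w : Fin n} (hall : ∀ v : Fin n, ∃ k, t^[k] v = r) (hw : w ≠ r) :
    dep t r (t w) < dep t r w := by
  have h := hall w
  have hd : 1 ≤ dep t r w := by
    rcases Nat.eq_zero_or_pos (dep t r w) with h0 | h1
    · exact absurd (by simpa [h0] using dep_spec h) hw
    · exact h1
  have : t^[dep t r w - 1] (t w) = r := by
    rw [← Function.iterate_succ_apply, Nat.succ_eq_add_one, Nat.sub_add_cancel hd]
    exact dep_spec h
  have := dep_le (hall (t w)) this
  omega

lemma revT_spanning (ht : IsSpanningTree ℓ r t) (hrev : Reversible ℓ) (j : Fin n) :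
    IsSpanningTree ℓ j (reverseTree t r j) := by
  obtain ⟨htr, hedge, hall⟩ := ht
  have h := hall j
  set d := dep t r j with hd
  have hvd : t^[d] j = r := dep_spec h
  refine ⟨revT_root h, ?_, ?_⟩
  · -- edges
    intro w hwj
    by_cases hp : ∃ m < d, t^[m+1] j = w
    · obtain ⟨m, hm, hmw⟩ := hp
      rw [← hmw, revT_on_path h hm]
      have h1 : t^[m] j ≠ r := dep_min h m hm
      have h2 : t^[m+1] j = t (t^[m] j) := Function.iterate_succ_apply' t m j
      have := hedge _ h1
      rw [← h2] at this
      exact (hrev _ _).mp this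
    · push_neg at hp
      have hoff : ∀ m ≤ d, t^[m] j ≠ w := by
        intro m hm
        cases m with
        | zero => simpa using fun hc => hwj hc.symm
        | succ m => exact hp m (by omega)
      rw [revT_off_path h hoff]
      have hwr : w ≠ r := fun hc => hoff d le_rfl (by rw [hvd, hc])
      exact hedge _ hwr
  · -- reachability
    have key : ∀ K w, dep t r w ≤ K → ∃ k, (reverseTree t r j)^[k] w = j := by
      intro K
      induction K with
      | zero =>
        intro w hw
        have hwr : w = r := by
          have := dep_spec (hall w)
          rw [Nat.le_zero.mp hw] at this
          simpa using this
        have hit := revT_iter_path h d le_rfl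
        rw [hvd] at hit
        exact ⟨d, by rw [hwr]; exact hit⟩
      | succ K ih =>
        intro w hw
        by_cases hp : ∃ m ≤ d, t^[m] j = w
        · obtain ⟨m, hm, hmw⟩ := hp
          exact ⟨m, by rw [← hmw]; exact revT_iter_path h m hm⟩
        · push_neg at hp
          have hwr : w ≠ r := fun hc => hp d le_rfl (by rw [hvd, hc])
          obtain ⟨k, hk⟩ := ih (t w) (by have := dep_t_lt hall hwr; omega)
          refine ⟨k + 1, ?_⟩
          rw [Function.iterate_succ_apply, revT_off_path h hp, hk]
    intro w
    exact key (dep t r w) w le_rfl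

end Jar

namespace Jar
variable {n : ℕ} {ℓ : Fin n → Fin n → ℝ} {r : Fin n} {t : Fin n → Fin n}

lemma treeWeight_split (ht : IsSpanningTree ℓ r t) (j : Fin n) :
    ∃ C : ℝ,
      treeWeight ℓ r t
        = (∏ m ∈ Finset.range (dep t r j), ℓ (t^[m] j) (t^[m+1] j)) * C ∧
      treeWeight ℓ j (reverseTree t r j)
        = (∏ m ∈ Finset.range (dep t r j), ℓ (t^[m+1] j) (t^[m] j)) * C := by
  have h := ht.2.2 j
  set d := dep t r j with hd
  have hvd : t^[d] j = r := dep_spec h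
  set s : Finset (Fin n) := (Finset.range (d+1)).image (fun m => t^[m] j) with hs
  have hmem_s : ∀ w, w ∈ s ↔ ∃ m ≤ d, t^[m] j = w := by
    intro w
    simp only [hs, Finset.mem_image, Finset.mem_range, Nat.lt_succ_iff]
  refine ⟨∏ w ∈ univ.filter (fun w => w ∉ s), ℓ w (t w), ?_, ?_⟩
  · -- treeWeight r t
    rw [treeWeight,
      ← Finset.prod_filter_mul_prod_filter_not (univ.filter (· ≠ r)) (· ∈ s)]
    congr 1
    · have hset : (univ.filter (· ≠ r)).filter (· ∈ s)
          = (Finset.range d).image (fun m => t^[m] j) := by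
        ext w
        simp only [Finset.mem_filter, Finset.mem_univ, true_and, Finset.mem_image,
          Finset.mem_range, hmem_s]
        constructor
        · rintro ⟨hwr, m, hm, rfl⟩
          refine ⟨m, ?_, rfl⟩
          rcases Nat.lt_or_ge m d with h' | h'
          · exact h'
          · exact absurd (by rw [← hvd]; congr 1; omega) hwr
        · rintro ⟨m, hm, rfl⟩
          exact ⟨dep_min h m hm, m, by omega, rfl⟩
      rw [hset, Finset.prod_image (fun a ha b hb hab =>
        iter_inj h a b (by simp at ha; omega) (by simp at hb; omega) hab)]
      refine Finset.prod_congr rfl (fun m hm => ?_)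
      rw [Function.iterate_succ_apply']
    · congr 1
      ext w
      simp only [Finset.mem_filter, Finset.mem_univ, true_and, and_iff_right_iff_imp]
      intro hws hwr
      exact hws ((hmem_s w).mpr ⟨d, le_rfl, by rw [hvd, hwr]⟩)
  · -- treeWeight j Φ
    rw [treeWeight,
      ← Finset.prod_filter_mul_prod_filter_not (univ.filter (· ≠ j)) (· ∈ s)]
    congr 1
    · have hset : (univ.filter (· ≠ j)).filter (· ∈ s)
          = (Finset.range d).image (fun m => t^[m+1] j) := by
        ext w
        simp only [Finset.mem_filter, Finset.mem_univ, true_and, Finset.mem_image,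
          Finset.mem_range, hmem_s]
        constructor
        · rintro ⟨hwj, m, hm, rfl⟩
          cases m with
          | zero => exact absurd (by simp : t^[0] j = j) hwj
          | succ m => exact ⟨m, by omega, rfl⟩
        · rintro ⟨m, hm, rfl⟩
          constructor
          · intro hc
            have : m + 1 = 0 := iter_inj h _ _ (by omega) (by omega) (by simpa using hc)
            omega
          · exact ⟨m+1, by omega, rfl⟩
      rw [hset, Finset.prod_image (fun a ha b hb hab => by
        have := iter_inj h (a+1) (b+1) (by simp at ha; omega) (by simp at hb; omega) hab
        omega)]
      refine Finset.prod_congr rfl (fun m hm => ?_)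
      rw [revT_on_path h (Finset.mem_range.mp hm)]
    · refine Finset.prod_congr ?_ (fun w hw => ?_)
      · ext w
        simp only [Finset.mem_filter, Finset.mem_univ, true_and, and_iff_right_iff_imp]
        intro hws
        intro hwj
        exact hws ((hmem_s w).mpr ⟨0, by omega, by simp [hwj]⟩)
      · simp only [Finset.mem_filter, Finset.mem_univ, true_and] at hw
        rw [revT_off_path h (fun m hm hc => hw ((hmem_s w).mpr ⟨m, hm, hc⟩))]

lemma tree_term (ht : IsSpanningTree ℓ r t) (hrev : Reversible ℓ) (j : Fin n) :
    treeWeight ℓ r t * Real.exp (-pathAction ℓ (treePath t r j))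
      = treeWeight ℓ j (reverseTree t r j) := by
  obtain ⟨C, hC1, hC2⟩ := treeWeight_split ht j
  have h := ht.2.2 j
  set d := dep t r j with hd
  have ha : ∀ m ∈ Finset.range d, 0 < ℓ (t^[m] j) (t^[m+1] j) := by
    intro m hm
    rw [Function.iterate_succ_apply']
    exact ht.2.1 _ (dep_min h m (Finset.mem_range.mp hm))
  have hb : ∀ m ∈ Finset.range d, 0 < ℓ (t^[m+1] j) (t^[m] j) :=
    fun m hm => (hrev _ _).mp (ha m hm)
  have hact : pathAction ℓ (treePath t r j)
      = ∑ m ∈ Finset.range d,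
          Real.log (ℓ (t^[m] j) (t^[m+1] j) / ℓ (t^[m+1] j) (t^[m] j)) := by
    rw [pathAction, edges_eq h, List.map_map]
    rfl
  have hexp : Real.exp (-pathAction ℓ (treePath t r j))
      = ∏ m ∈ Finset.range d,
          (ℓ (t^[m+1] j) (t^[m] j) / ℓ (t^[m] j) (t^[m+1] j)) := by
    rw [hact, Real.exp_neg, Real.exp_sum, ← Finset.prod_inv_distrib]
    refine Finset.prod_congr rfl (fun m hm => ?_)
    rw [Real.exp_log (div_pos (ha m hm) (hb m hm)), inv_div]
  have hkey : (∏ m ∈ Finset.range d, ℓ (t^[m] j) (t^[m+1] j))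
      * (∏ m ∈ Finset.range d, (ℓ (t^[m+1] j) (t^[m] j) / ℓ (t^[m] j) (t^[m+1] j)))
      = ∏ m ∈ Finset.range d, ℓ (t^[m+1] j) (t^[m] j) := by
    rw [← Finset.prod_mul_distrib]
    refine Finset.prod_congr rfl (fun m hm => ?_)
    rw [mul_comm, div_mul_cancel₀ _ (ne_of_gt (ha m hm))]
  rw [hC1, hC2, hexp]
  calc (∏ m ∈ Finset.range d, ℓ (t^[m] j) (t^[m+1] j)) * C
        * (∏ m ∈ Finset.range d, (ℓ (t^[m+1] j) (t^[m] j) / ℓ (t^[m] j) (t^[m+1] j)))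
      = ((∏ m ∈ Finset.range d, ℓ (t^[m] j) (t^[m+1] j))
        * (∏ m ∈ Finset.range d, (ℓ (t^[m+1] j) (t^[m] j) / ℓ (t^[m] j) (t^[m+1] j)))) * C := by
        ring
    _ = (∏ m ∈ Finset.range d, ℓ (t^[m+1] j) (t^[m] j)) * C := by rw [hkey]

lemma rev_iter (ht : IsSpanningTree ℓ r t) (j : Fin n) :
    ∀ m, m ≤ dep t r j → (reverseTree t r j)^[m] r = t^[dep t r j - m] j := by
  have h := ht.2.2 j
  intro m
  induction m with
  | zero => intro _; simpa using (dep_spec h).symm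
  | succ m ih =>
    intro hm
    rw [Function.iterate_succ_apply', ih (by omega)]
    have h1 : dep t r j - m = (dep t r j - (m+1)) + 1 := by omega
    rw [h1, revT_on_path h (by omega)]

lemma dep_rev (ht : IsSpanningTree ℓ r t) (j : Fin n) :
    dep (reverseTree t r j) j r = dep t r j ∧
      ∃ k, (reverseTree t r j)^[k] r = j := by
  have h := ht.2.2 j
  have hex : (reverseTree t r j)^[dep t r j] r = j := by
    rw [rev_iter ht j _ le_rfl]
    simp
  refine ⟨le_antisymm (dep_le ⟨_, hex⟩ hex) ?_, ⟨_, hex⟩⟩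
  by_contra hlt
  push_neg at hlt
  have h2 := dep_spec (⟨_, hex⟩ : ∃ k, (reverseTree t r j)^[k] r = j)
  set d' := dep (reverseTree t r j) j r with hd'
  have h3 : (reverseTree t r j)^[d'] r = t^[dep t r j - d'] j := rev_iter ht j d' (by omega)
  rw [h2] at h3
  have : 0 = dep t r j - d' := iter_inj h 0 _ (by omega) (by omega) (by simpa using h3)
  omega

lemma rev_rev (ht : IsSpanningTree ℓ r t) (j : Fin n) :
    reverseTree (reverseTree t r j) j r = t := by
  have h := ht.2.2 j
  obtain ⟨hdep, hex⟩ := dep_rev ht j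
  set d := dep t r j with hd
  funext w
  by_cases hp : ∃ m ≤ d, t^[m] j = w
  · obtain ⟨m, hm, rfl⟩ := hp
    rcases Nat.lt_or_ge m d with hmd | hmd
    · -- w = t^[m] j with m < d
      have h1 : (reverseTree t r j)^[(d - m - 1) + 1] r = t^[m] j := by
        rw [rev_iter ht j _ (by omega)]
        congr 1
        omega
      have h2 := revT_on_path (t := reverseTree t r j) (r := j) (j := r) hex
        (m := d - m - 1) (by rw [hdep]; omega)
      rw [h1] at h2
      rw [h2, rev_iter ht j _ (by omega)]
      have : d - (d - m - 1) = m + 1 := by omega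
      rw [this, Function.iterate_succ_apply']
    · -- m = d, w = r
      have hmd' : m = d := by omega
      subst hmd'
      rw [dep_spec h, revT_root (t := reverseTree t r j) (r := j) (j := r) hex, ht.1]
  · -- w off the path
    push_neg at hp
    have hoff : ∀ m ≤ dep (reverseTree t r j) j r, (reverseTree t r j)^[m] r ≠ w := by
      intro m hm
      rw [hdep] at hm
      rw [rev_iter ht j m hm]
      exact hp _ (by omega)
    rw [revT_off_path (t := reverseTree t r j) (r := j) (j := r) hex hoff]
    exact revT_off_path h hp

end Jar


open Jar

/-- Jarzynski-type identity over minimal paths: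
`∑_{m ∈ M(i,1)} Pr(m) · exp (-S(m)) = q(Θ_i) / q(Θ_1)`, the normalized
steady-state component `ρ_i(G)`. -/
theorem jarzynski_over_minimal_paths {n : ℕ} (hn : 0 < n)
    (ℓ : Fin n → Fin n → ℝ) (hℓ : ∀ i j, 0 ≤ ℓ i j)
    (hsc : StronglyConnected ℓ) (hrev : Reversible ℓ) (i : Fin n) :
    (∑ᶠ m ∈ {p : List (Fin n) | IsMinPathFrom ℓ i ⟨0, hn⟩ p},
        (∑ T ∈ (Trees ℓ ⟨0, hn⟩).filter (fun T => treePath T ⟨0, hn⟩ i = m),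
            treeWeight ℓ ⟨0, hn⟩ T / ∑ T' ∈ Trees ℓ ⟨0, hn⟩, treeWeight ℓ ⟨0, hn⟩ T') *
          Real.exp (-pathAction ℓ m)) =
      (∑ T ∈ Trees ℓ i, treeWeight ℓ i T) /
        (∑ T ∈ Trees ℓ ⟨0, hn⟩, treeWeight ℓ ⟨0, hn⟩ T) := by
  set r : Fin n := ⟨0, hn⟩ with hr
  set Q := ∑ T' ∈ Trees ℓ r, treeWeight ℓ r T' with hQ
  have hmemT : ∀ (k : Fin n) (T : Fin n → Fin n), T ∈ Trees ℓ k ↔ IsSpanningTree ℓ k T := by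
    intro k T; simp [Trees]
  set I : Finset (List (Fin n)) := (Trees ℓ r).image (fun T => treePath T r i) with hI
  have hstep1 : (∑ᶠ m ∈ {p : List (Fin n) | IsMinPathFrom ℓ i r p},
      (∑ T ∈ (Trees ℓ r).filter (fun T => treePath T r i = m),
          treeWeight ℓ r T / Q) * Real.exp (-pathAction ℓ m))
      = ∑ m ∈ I,
        (∑ T ∈ (Trees ℓ r).filter (fun T => treePath T r i = m),
            treeWeight ℓ r T / Q) * Real.exp (-pathAction ℓ m) := by
    apply finsum_mem_eq_sum_of_inter_support_eq
    ext m
    simp only [Set.mem_inter_iff, Set.mem_setOf_eq, Function.mem_support, hI,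
      Finset.coe_image, Set.mem_image, Finset.mem_coe]
    constructor
    · rintro ⟨hmin, hne⟩
      refine ⟨?_, hne⟩
      have hfil : (Trees ℓ r).filter (fun T => treePath T r i = m) ≠ ∅ := by
        intro hemp
        apply hne
        rw [hemp]
        simp
      obtain ⟨T, hT⟩ := Finset.nonempty_of_ne_empty hfil
      simp only [Finset.mem_filter] at hT
      exact ⟨T, hT.1, hT.2⟩
    · rintro ⟨⟨T, hT, rfl⟩, hne⟩
      exact ⟨treePath_isMinPath ((hmemT r T).mp hT) i, hne⟩
  rw [hstep1]
  have hstep2 : ∀ m ∈ I,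
      (∑ T ∈ (Trees ℓ r).filter (fun T => treePath T r i = m),
          treeWeight ℓ r T / Q) * Real.exp (-pathAction ℓ m)
      = ∑ T ∈ (Trees ℓ r).filter (fun T => treePath T r i = m),
          treeWeight ℓ r T / Q * Real.exp (-pathAction ℓ (treePath T r i)) := by
    intro m _
    rw [Finset.sum_mul]
    refine Finset.sum_congr rfl (fun T hT => ?_)
    rw [(Finset.mem_filter.mp hT).2]
  rw [Finset.sum_congr rfl hstep2,
    Finset.sum_fiberwise_of_maps_to (fun T hT => Finset.mem_image_of_mem _ hT)]
  have hstep3 : ∑ T ∈ Trees ℓ r,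
      treeWeight ℓ r T / Q * Real.exp (-pathAction ℓ (treePath T r i))
      = (∑ T ∈ Trees ℓ r,
          treeWeight ℓ r T * Real.exp (-pathAction ℓ (treePath T r i))) / Q := by
    rw [Finset.sum_div]
    exact Finset.sum_congr rfl (fun T _ => by ring)
  rw [hstep3]
  congr 1
  refine Finset.sum_nbij' (fun T => reverseTree T r i) (fun T => reverseTree T i r)
    ?_ ?_ ?_ ?_ ?_
  · intro T hT; exact (hmemT i _).mpr (revT_spanning ((hmemT r T).mp hT) hrev i)
  · intro T hT; exact (hmemT r _).mpr (revT_spanning ((hmemT i T).mp hT) hrev r)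
  · intro T hT; exact rev_rev ((hmemT r T).mp hT) i
  · intro T hT; exact rev_rev ((hmemT i T).mp hT) r
  · intro T hT; exact tree_term ((hmemT r T).mp hT) hrev i
end
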